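/- arXiv:2404.03594 — 4 statements merged into one kernel-verified Lean document; each statement's English description precedes it below -/
import Mathlib

section
/- The inclusion {V = I_m ⊗ ỹ^⊤ : ỹ ∈ ℝ^n, ỹ ỹ^⊤ ⪯ P} ⊆ {V ∈ ℝ^{m×mn} : V^⊤ V ⪯ I_m ⊗ P} holds for every n×n positive definite P, but the reverse inclusion fails in general; specifically, for m = n = 2 and P = [[p₁₁, p₁₂], [p₁₂, p₂₂]] ≻ 0, setting v = (1/2)(p₁₁ − p₁₂²/p₂₂) > 0 and V = [[0,0,0,0],[√v,0,0,0]], one has V^⊤V ⪯ I_2 ⊗ P but V is not of the form I_2 ⊗ ỹ^⊤ for any ỹ ∈ ℝ². -/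
open Matrix Kronecker

/-- The set 𝒮₁ = { V = I_m ⊗ ỹᵀ : ỹỹᵀ ⪯ P }. -/
def S1 (m n : ℕ) (P : Matrix (Fin n) (Fin n) ℝ) : Set (Matrix (Fin m) (Fin m × Fin n) ℝ) :=
  {V | ∃ y : Fin n → ℝ, (P - Matrix.vecMulVec y y).PosSemidef ∧
    V = ((1 : Matrix (Fin m) (Fin m) ℝ) ⊗ₖ Matrix.replicateRow (Fin 1) y).submatrix
          (fun i : Fin m => (i, (0 : Fin 1))) id}

/-- The set 𝒮₂ = { V : VᵀV ⪯ I_m ⊗ P }. -/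
def S2 (m n : ℕ) (P : Matrix (Fin n) (Fin n) ℝ) : Set (Matrix (Fin m) (Fin m × Fin n) ℝ) :=
  {V | (((1 : Matrix (Fin m) (Fin m) ℝ) ⊗ₖ P) - Vᵀ * V).PosSemidef}

noncomputable def Vcex (v : ℝ) : Matrix (Fin 2) (Fin 2 × Fin 2) ℝ :=
  Matrix.of fun i q => if i = 1 ∧ q.1 = 0 ∧ q.2 = 0 then Real.sqrt v else 0

lemma one_kron_psd {m n : ℕ} {Q : Matrix (Fin n) (Fin n) ℝ} (hQ : Q.PosSemidef) :
    ((1 : Matrix (Fin m) (Fin m) ℝ) ⊗ₖ Q).PosSemidef := by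
  obtain ⟨B, rfl⟩ : ∃ B : Matrix (Fin n) (Fin n) ℝ, Q = Bᴴ * B := by
    open scoped MatrixOrder in
    exact CStarAlgebra.nonneg_iff_eq_star_mul_self.mp hQ.nonneg
  have h1 : ((1 : Matrix (Fin m) (Fin m) ℝ) ⊗ₖ B)ᴴ = (1 : Matrix (Fin m) (Fin m) ℝ) ⊗ₖ Bᴴ := by
    ext ⟨i, a⟩ ⟨j, b⟩
    simp [Matrix.conjTranspose_apply, Matrix.one_apply, eq_comm]
  have h2 : (1 : Matrix (Fin m) (Fin m) ℝ) ⊗ₖ (Bᴴ * B) =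
      ((1 : Matrix (Fin m) (Fin m) ℝ) ⊗ₖ B)ᴴ * ((1 : Matrix (Fin m) (Fin m) ℝ) ⊗ₖ B) := by
    rw [h1, ← Matrix.mul_kronecker_mul, Matrix.one_mul]
  rw [h2]
  exact Matrix.posSemidef_conjTranspose_mul_self _

theorem stmt3 :
    (∀ (m n : ℕ) (P : Matrix (Fin n) (Fin n) ℝ), P.PosDef → S1 m n P ⊆ S2 m n P) ∧
    (∀ p11 p12 p22 : ℝ, (!![p11, p12; p12, p22]).PosDef →
      0 < (p11 - p12 ^ 2 / p22) / 2 ∧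
      Vcex ((p11 - p12 ^ 2 / p22) / 2) ∈ S2 2 2 !![p11, p12; p12, p22] ∧
      Vcex ((p11 - p12 ^ 2 / p22) / 2) ∉ S1 2 2 !![p11, p12; p12, p22]) := by
  constructor
  · rintro m n P hP V ⟨y, hy, rfl⟩
    have key : ((1 : Matrix (Fin m) (Fin m) ℝ) ⊗ₖ P) -
        (((1 : Matrix (Fin m) (Fin m) ℝ) ⊗ₖ Matrix.replicateRow (Fin 1) y).submatrix
          (fun i : Fin m => (i, (0 : Fin 1))) id)ᵀ *
        (((1 : Matrix (Fin m) (Fin m) ℝ) ⊗ₖ Matrix.replicateRow (Fin 1) y).submatrix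
          (fun i : Fin m => (i, (0 : Fin 1))) id) =
        (1 : Matrix (Fin m) (Fin m) ℝ) ⊗ₖ (P - Matrix.vecMulVec y y) := by
      ext ⟨i, a⟩ ⟨j, b⟩
      simp [Matrix.mul_apply, Matrix.one_apply, Matrix.vecMulVec_apply, ite_mul, mul_ite,
        Finset.sum_ite_eq, Finset.sum_ite_eq']
      rcases eq_or_ne i j with rfl | h
      · simp [mul_comm]
      · simp [h, Ne.symm h]
    exact Set.mem_setOf_eq ▸ key ▸ one_kron_psd hy
  · intro p11 p12 p22 hP
    have hdet : 0 < p11 * p22 - p12 ^ 2 := by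
      have := hP.det_pos
      rw [Matrix.det_fin_two_of] at this
      nlinarith
    have hp22 : 0 < p22 := by
      have := (Matrix.posDef_iff_dotProduct_mulVec.mp hP).2 (x := ![0, 1]) (by simp [Function.ne_iff])
      simpa [dotProduct, Matrix.mulVec, Fin.sum_univ_two] using this
    have hp11 : 0 < p11 := by
      have := (Matrix.posDef_iff_dotProduct_mulVec.mp hP).2 (x := ![1, 0]) (by simp [Function.ne_iff])
      simpa [dotProduct, Matrix.mulVec, Fin.sum_univ_two] using this
    set v : ℝ := (p11 - p12 ^ 2 / p22) / 2 with hv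
    have hv' : v * p22 = (p11 * p22 - p12 ^ 2) / 2 := by
      rw [hv]; field_simp
    have hvpos : 0 < v := by
      rw [hv]
      have : 0 < p11 - p12 ^ 2 / p22 := by
        rw [sub_pos, div_lt_iff₀ hp22]
        nlinarith
      linarith
    refine ⟨hvpos, ?_, ?_⟩
    · -- membership in S2
      have hsq : Real.sqrt v * Real.sqrt v = v := Real.mul_self_sqrt hvpos.le
      rw [S2, Set.mem_setOf_eq, Matrix.posSemidef_iff_dotProduct_mulVec]
      constructor
      · ext ⟨i, a⟩ ⟨j, b⟩
        simp only [Matrix.conjTranspose_apply, Matrix.sub_apply, Matrix.mul_apply,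
          kroneckerMap_apply, Matrix.one_apply, Vcex, Matrix.transpose_apply, Matrix.of_apply,
          star_trivial]
        fin_cases i <;> fin_cases j <;> fin_cases a <;> fin_cases b <;>
          simp [Fin.sum_univ_two, Matrix.cons_val_zero, Matrix.cons_val_one]
      · intro x
        have expand : x ⬝ᵥ ((((1 : Matrix (Fin 2) (Fin 2) ℝ) ⊗ₖ !![p11, p12; p12, p22]) -
            (Vcex v)ᵀ * (Vcex v)) *ᵥ x) =
            (p11 - v) * x (0,0) * x (0,0) + 2 * p12 * x (0,0) * x (0,1) +
            p22 * x (0,1) * x (0,1) + p11 * x (1,0) * x (1,0) +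
            2 * p12 * x (1,0) * x (1,1) + p22 * x (1,1) * x (1,1) := by
          simp only [dotProduct, Matrix.mulVec, Matrix.sub_apply, Matrix.mul_apply,
            kroneckerMap_apply, Matrix.one_apply, Vcex, Matrix.transpose_apply, Matrix.of_apply,
            dotProduct, Fintype.sum_prod_type, Fin.sum_univ_two]
          norm_num [Real.mul_self_sqrt hvpos.le]
          ring
        have hstar : star x = x := by ext i; simp
        rw [hstar, expand]
        nlinarith [sq_nonneg (p22 * x (0,1) + p12 * x (0,0)), sq_nonneg (p22 * x (1,1) + p12 * x (1,0)),
          sq_nonneg (x (0,0)), sq_nonneg (x (1,0)), mul_pos hp22 hp22,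
          mul_nonneg (mul_nonneg hdet.le (sq_nonneg (x (1,0)))) hp22.le,
          mul_nonneg (mul_nonneg (by linarith [hv'] : (0:ℝ) ≤ p11 * p22 - p12 ^ 2 - v * p22) (sq_nonneg (x (0,0)))) hp22.le]
    · -- not in S1
      rintro ⟨y, -, hV⟩
      have h := congrFun (congrFun hV 1) (0, 0)
      simp [Vcex, Matrix.one_apply] at h
      exact absurd h (by positivity)
end

section
/- Let 𝐀 ∈ ℝ^{p×p} be symmetric positive definite, ζ ∈ ℝ^{p×n}, and 𝐐 ∈ ℝ^{n×n} symmetric positive semidefinite. Then {Z ∈ ℝ^{p×n} : (Z − ζ)^⊤ 𝐀 (Z − ζ) ⪯ 𝐐} = {ζ + 𝐀^{-1/2} Υ 𝐐^{1/2} : Υ ∈ ℝ^{p×n}, ‖Υ‖ ≤ 1}. -/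
open Matrix Kronecker

noncomputable def specNorm {m n : Type*} [Fintype m] [Fintype n] [DecidableEq n]
    (A : Matrix m n ℝ) : ℝ :=
  ‖LinearMap.toContinuousLinearMap (Matrix.toEuclideanLin A)‖

/-- The square root of a positive semidefinite matrix, with its definition in the older Mathlib
(removed since). -/
noncomputable def Matrix.PosSemidef.sqrt {n : Type*} [Fintype n] [DecidableEq n] {𝕜 : Type*}
    [RCLike 𝕜] [PartialOrder 𝕜] {A : Matrix n n 𝕜} (hA : A.PosSemidef) : Matrix n n 𝕜 :=
  (hA.1.eigenvectorUnitary : Matrix n n 𝕜) *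
    diagonal (fun i => ((√(hA.1.eigenvalues i) : ℝ) : 𝕜)) *
    (star hA.1.eigenvectorUnitary : Matrix n n 𝕜)

private lemma psd_sqrt_herm {m : ℕ} {A : Matrix (Fin m) (Fin m) ℝ} (hA : A.PosSemidef) :
    hA.sqrt.IsHermitian := by
  unfold Matrix.PosSemidef.sqrt
  rw [IsHermitian, conjTranspose_mul, conjTranspose_mul, star_eq_conjTranspose,
    conjTranspose_conjTranspose, diagonal_conjTranspose, Matrix.mul_assoc]
  congr 3

private lemma psd_sqrt_mul_self {m : ℕ} {A : Matrix (Fin m) (Fin m) ℝ} (hA : A.PosSemidef) :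
    hA.sqrt * hA.sqrt = A := by
  unfold Matrix.PosSemidef.sqrt
  have hU1 : star (hA.1.eigenvectorUnitary : Matrix (Fin m) (Fin m) ℝ) *
      (hA.1.eigenvectorUnitary : Matrix (Fin m) (Fin m) ℝ) = 1 :=
    (Unitary.mem_iff.mp hA.1.eigenvectorUnitary.2).1
  conv_rhs => rw [hA.1.spectral_theorem]
  rw [Unitary.conjStarAlgAut_apply]
  simp only [Matrix.mul_assoc]
  rw [← Matrix.mul_assoc (star _) (hA.1.eigenvectorUnitary : Matrix (Fin m) (Fin m) ℝ), hU1,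
    Matrix.one_mul, ← Matrix.mul_assoc (diagonal _) (diagonal _), diagonal_mul_diagonal]
  congr 3
  funext i
  simp [Real.mul_self_sqrt (hA.eigenvalues_nonneg i)]

private lemma specNorm_le_one_iff {p n : ℕ} (Υ : Matrix (Fin p) (Fin n) ℝ) :
    specNorm Υ ≤ 1 ↔ (1 - Υᵀ * Υ).PosSemidef := by
  have key : ∀ x : Fin n → ℝ,
      x ⬝ᵥ ((1 - Υᵀ * Υ) *ᵥ x)
        = ‖(WithLp.equiv 2 (Fin n → ℝ)).symm x‖ ^ 2
          - ‖Matrix.toEuclideanLin Υ ((WithLp.equiv 2 (Fin n → ℝ)).symm x)‖ ^ 2 := by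
    intro x
    have h1 : ‖(WithLp.equiv 2 (Fin n → ℝ)).symm x‖ ^ 2 = x ⬝ᵥ x := by
      rw [← real_inner_self_eq_norm_sq]
      simp [PiLp.inner_apply, dotProduct, RCLike.inner_apply, mul_comm, EuclideanSpace.norm_sq_eq]; simp [sq]
    have h2 : ‖Matrix.toEuclideanLin Υ ((WithLp.equiv 2 (Fin n → ℝ)).symm x)‖ ^ 2
        = (Υ *ᵥ x) ⬝ᵥ (Υ *ᵥ x) := by
      rw [← real_inner_self_eq_norm_sq, Matrix.toEuclideanLin_apply]
      simp [PiLp.inner_apply, dotProduct, RCLike.inner_apply, mul_comm, EuclideanSpace.norm_sq_eq]; simp [sq]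
    rw [h1, h2, Matrix.sub_mulVec, dotProduct_sub, Matrix.one_mulVec]
    congr 1
    rw [← Matrix.mulVec_mulVec, Matrix.dotProduct_mulVec, Matrix.vecMul_transpose]
  constructor
  · intro h
    refine PosSemidef.of_dotProduct_mulVec_nonneg ?_ ?_
    · exact (isHermitian_one.sub (by simpa using isHermitian_conjTranspose_mul_self Υ))
    · intro x
      rw [star_trivial, key]
      have hle : ‖Matrix.toEuclideanLin Υ ((WithLp.equiv 2 (Fin n → ℝ)).symm x)‖
          ≤ ‖(WithLp.equiv 2 (Fin n → ℝ)).symm x‖ := by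
        have := (LinearMap.toContinuousLinearMap (Matrix.toEuclideanLin Υ)).le_opNorm
          ((WithLp.equiv 2 (Fin n → ℝ)).symm x)
        simp only [LinearMap.coe_toContinuousLinearMap'] at this
        calc _ ≤ specNorm Υ * ‖(WithLp.equiv 2 (Fin n → ℝ)).symm x‖ := this
          _ ≤ 1 * _ := by
              apply mul_le_mul_of_nonneg_right h (norm_nonneg _)
          _ = _ := one_mul _
      nlinarith [norm_nonneg (Matrix.toEuclideanLin Υ ((WithLp.equiv 2 (Fin n → ℝ)).symm x)),
        norm_nonneg ((WithLp.equiv 2 (Fin n → ℝ)).symm x)]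
  · intro h
    apply ContinuousLinearMap.opNorm_le_bound _ zero_le_one
    intro v
    rw [one_mul]
    have := h.dotProduct_mulVec_nonneg (WithLp.equiv 2 (Fin n → ℝ) v)
    rw [star_trivial, key] at this
    simp only [LinearMap.coe_toContinuousLinearMap']
    have hv : (WithLp.equiv 2 (Fin n → ℝ)).symm ((WithLp.equiv 2 (Fin n → ℝ)) v) = v := rfl
    rw [hv] at this
    nlinarith [norm_nonneg (Matrix.toEuclideanLin Υ v), norm_nonneg v]

theorem stmt6 (p n : ℕ) (A : Matrix (Fin p) (Fin p) ℝ) (hA : A.PosDef)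
    (ζ : Matrix (Fin p) (Fin n) ℝ) (Q : Matrix (Fin n) (Fin n) ℝ) (hQ : Q.PosSemidef) :
    {Z : Matrix (Fin p) (Fin n) ℝ | (Q - (Z - ζ)ᵀ * A * (Z - ζ)).PosSemidef} =
      {Z | ∃ Υ : Matrix (Fin p) (Fin n) ℝ, specNorm Υ ≤ 1 ∧
        Z = ζ + hA.posSemidef.sqrt⁻¹ * Υ * hQ.sqrt} := by
  classical
  -- A-side setup
  set SA := hA.posSemidef.sqrt with hSAdef
  have hSAherm : SA.IsHermitian := psd_sqrt_herm hA.posSemidef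
  have hSAsym : SAᵀ = SA := by
    rw [← conjTranspose_eq_transpose_of_trivial]; exact hSAherm
  have hSAmul : SA * SA = A := psd_sqrt_mul_self hA.posSemidef
  have hdetSA : IsUnit SA.det := by
    have hdA : 0 < A.det := hA.det_pos
    rw [← hSAmul, det_mul] at hdA
    have : SA.det ≠ 0 := by
      intro h0; rw [h0, mul_zero] at hdA; exact lt_irrefl _ hdA
    exact this.isUnit
  have hSAinv1 : SA⁻¹ * SA = 1 := Matrix.nonsing_inv_mul _ hdetSA
  have hSAinv2 : SA * SA⁻¹ = 1 := Matrix.mul_nonsing_inv _ hdetSA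
  have hSAinvT : (SA⁻¹)ᵀ = SA⁻¹ := by rw [transpose_nonsing_inv, hSAsym]
  -- Q-side setup
  set U : Matrix (Fin n) (Fin n) ℝ := (hQ.1.eigenvectorUnitary : Matrix (Fin n) (Fin n) ℝ)
    with hUdef
  have hU1 : star U * U = 1 := (Unitary.mem_iff.mp hQ.1.eigenvectorUnitary.2).1
  have hU2 : U * star U = 1 := (Unitary.mem_iff.mp hQ.1.eigenvectorUnitary.2).2
  set eig : Fin n → ℝ := hQ.1.eigenvalues with heigdef
  have heig : ∀ i, 0 ≤ eig i := hQ.eigenvalues_nonneg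
  set d : Fin n → ℝ := fun i => Real.sqrt (eig i) with hddef
  have hco1 : (RCLike.ofReal ∘ hQ.1.eigenvalues : Fin n → ℝ) = eig := by
    funext i; simp [heigdef]
  have hco2 : (RCLike.ofReal ∘ Real.sqrt ∘ hQ.1.eigenvalues : Fin n → ℝ) = d := by
    funext i; simp [hddef, heigdef]
  have hQspec : Q = U * diagonal eig * star U := by
    conv_lhs => rw [hQ.1.spectral_theorem]
    rw [Unitary.conjStarAlgAut_apply, hco1]
  have hS : hQ.sqrt = U * diagonal d * star U := by
    rw [Matrix.PosSemidef.sqrt, ← hco2]; rfl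
  set e : Fin n → ℝ := fun i => if eig i = 0 then 0 else (d i)⁻¹ with hedef
  set ind : Fin n → ℝ := fun i => if eig i = 0 then 0 else 1 with hinddef
  have hd0 : ∀ i, eig i ≠ 0 → d i ≠ 0 := by
    intro i hi
    simp only [hddef]
    exact Real.sqrt_ne_zero'.mpr (lt_of_le_of_ne (heig i) (Ne.symm hi))
  have hdd : ∀ i, d i * d i = eig i := by
    intro i; simp only [hddef]; exact Real.mul_self_sqrt (heig i)
  -- conjugation helper
  have conjmul : ∀ a b : Fin n → ℝ,
      (U * diagonal a * star U) * (U * diagonal b * star U)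
        = U * diagonal (fun i => a i * b i) * star U := by
    intro a b
    have h1 : star U * (U * diagonal b * star U) = diagonal b * star U := by
      rw [← Matrix.mul_assoc, ← Matrix.mul_assoc, hU1, Matrix.one_mul]
    rw [Matrix.mul_assoc (U * diagonal a) (star U), h1, ← Matrix.mul_assoc,
      Matrix.mul_assoc U, Matrix.diagonal_mul_diagonal]
  have hsymmU : ∀ a : Fin n → ℝ,
      (U * diagonal a * star U)ᵀ = U * diagonal a * star U := by
    intro a
    rw [star_eq_conjTranspose, conjTranspose_eq_transpose_of_trivial, transpose_mul,
      transpose_mul, transpose_transpose, diagonal_transpose, Matrix.mul_assoc]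
  have hpvsym : (U * diagonal e * star U)ᵀ = U * diagonal e * star U := hsymmU e
  have hPsym : (U * diagonal ind * star U)ᵀ = U * diagonal ind * star U := hsymmU ind
  have hfun_ed : (fun i => e i * d i) = ind := by
    funext i
    by_cases hi : eig i = 0
    · simp [hedef, hinddef, hi]
    · simp only [hedef, hinddef, if_neg hi]
      exact inv_mul_cancel₀ (hd0 i hi)
  have hfun_ege : (fun i => (fun j => e j * eig j) i * e i) = ind := by
    funext i
    by_cases hi : eig i = 0
    · simp [hedef, hinddef, hi]
    · have hne := hd0 i hi
      simp only [hedef, hinddef, if_neg hi]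
      rw [← hdd i]
      field_simp
  have hfun_indeig : (fun i => ind i * eig i) = eig := by
    funext i
    by_cases hi : eig i = 0
    · simp [hinddef, hi]
    · simp [hinddef, hi]
  have hpvS : (U * diagonal e * star U) * hQ.sqrt = U * diagonal ind * star U := by
    rw [hS, conjmul, hfun_ed]
  have hpvQpv : (U * diagonal e * star U) * Q * (U * diagonal e * star U)
      = U * diagonal ind * star U := by
    rw [hQspec, conjmul, conjmul, hfun_ege]
  have hPQ : (U * diagonal ind * star U) * Q = Q := by
    rw [hQspec, conjmul, hfun_indeig]
  have h1P : (1 : Matrix (Fin n) (Fin n) ℝ) - U * diagonal ind * star U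
      = U * diagonal (fun i => 1 - ind i) * star U := by
    have hd1 : diagonal (fun i => (1 : ℝ) - ind i) = 1 - diagonal ind := by
      rw [← diagonal_one, diagonal_sub]
    rw [hd1, Matrix.mul_sub, Matrix.mul_one, Matrix.sub_mul, hU2]
  have h1Psym : ((1 : Matrix (Fin n) (Fin n) ℝ) - U * diagonal ind * star U)ᵀ
      = 1 - U * diagonal ind * star U := by
    rw [transpose_sub, transpose_one, hPsym]
  have h1PPSD : ((1 : Matrix (Fin n) (Fin n) ℝ) - U * diagonal ind * star U).PosSemidef := by
    rw [h1P]
    have hd : (0 : Fin n → ℝ) ≤ fun i => 1 - ind i := by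
      intro i
      by_cases hi : eig i = 0 <;> simp [hinddef, hi]
    have := (Matrix.PosSemidef.diagonal hd).mul_mul_conjTranspose_same U
    rwa [← star_eq_conjTranspose] at this
  -- main proof
  ext Z
  simp only [Set.mem_setOf_eq]
  constructor
  · intro hZ
    set C : Matrix (Fin p) (Fin n) ℝ := SA * (Z - ζ) with hCdef
    have hCC : Cᵀ * C = (Z - ζ)ᵀ * A * (Z - ζ) := by
      rw [hCdef, transpose_mul, hSAsym, Matrix.mul_assoc, ← Matrix.mul_assoc SA, hSAmul,
        ← Matrix.mul_assoc, Matrix.mul_assoc]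
    have hQC : (Q - Cᵀ * C).PosSemidef := by rw [hCC]; exact hZ
    -- kernel fact : C * (1 - P) = 0
    have hkerQ : (1 - U * diagonal ind * star U) * Q * (1 - U * diagonal ind * star U)
        = 0 := by
      rw [Matrix.sub_mul, Matrix.one_mul, hPQ, sub_self, Matrix.zero_mul]
    have hDD : (C * (1 - U * diagonal ind * star U))ᵀ * (C * (1 - U * diagonal ind * star U))
        = (1 - U * diagonal ind * star U) * (Cᵀ * C) * (1 - U * diagonal ind * star U) := by
      rw [transpose_mul, h1Psym]
      simp only [Matrix.mul_assoc]
    have hexp : (1 - U * diagonal ind * star U) * (Q - Cᵀ * C)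
          * (1 - U * diagonal ind * star U)
        = (1 - U * diagonal ind * star U) * Q * (1 - U * diagonal ind * star U)
          - (1 - U * diagonal ind * star U) * (Cᵀ * C)
            * (1 - U * diagonal ind * star U) := by
      rw [Matrix.mul_sub (1 - U * diagonal ind * star U) Q (Cᵀ * C),
        Matrix.sub_mul ((1 - U * diagonal ind * star U) * Q)
          ((1 - U * diagonal ind * star U) * (Cᵀ * C)) (1 - U * diagonal ind * star U)]
    have hNegPSD : ((1 - U * diagonal ind * star U) * (Q - Cᵀ * C)
        * (1 - U * diagonal ind * star U)).PosSemidef := by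
      have := hQC.mul_mul_conjTranspose_same (1 - U * diagonal ind * star U)
      rwa [conjTranspose_eq_transpose_of_trivial, h1Psym] at this
    have hNeg : (1 - U * diagonal ind * star U) * (Q - Cᵀ * C)
          * (1 - U * diagonal ind * star U)
        = - ((C * (1 - U * diagonal ind * star U))ᵀ
            * (C * (1 - U * diagonal ind * star U))) := by
      rw [hexp, hkerQ, zero_sub, hDD]
    have hD0 : C * (1 - U * diagonal ind * star U) = 0 := by
      have hvec : ∀ x : Fin n → ℝ, (C * (1 - U * diagonal ind * star U)) *ᵥ x = 0 := by
        intro x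
        apply dotProduct_self_eq_zero.mp
        have hq : x ⬝ᵥ (((C * (1 - U * diagonal ind * star U))ᵀ
              * (C * (1 - U * diagonal ind * star U))) *ᵥ x)
            = ((C * (1 - U * diagonal ind * star U)) *ᵥ x)
              ⬝ᵥ ((C * (1 - U * diagonal ind * star U)) *ᵥ x) := by
          conv_lhs => rw [← Matrix.mulVec_mulVec]
          rw [Matrix.dotProduct_mulVec, Matrix.vecMul_transpose]
        have hle : ((C * (1 - U * diagonal ind * star U)) *ᵥ x)
            ⬝ᵥ ((C * (1 - U * diagonal ind * star U)) *ᵥ x) ≤ 0 := by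
          have h2 := hNegPSD.dotProduct_mulVec_nonneg x
          rw [star_trivial, hNeg, Matrix.neg_mulVec, dotProduct_neg] at h2
          rw [← hq]
          linarith
        have hge : 0 ≤ ((C * (1 - U * diagonal ind * star U)) *ᵥ x)
            ⬝ᵥ ((C * (1 - U * diagonal ind * star U)) *ᵥ x) :=
          Finset.sum_nonneg fun i _ => mul_self_nonneg _
        linarith
      ext i j
      have := congrFun (hvec (Pi.single j 1)) i
      simpa using this
    have hCP : C * (U * diagonal ind * star U) = C := by
      have hthis : C * (1 - U * diagonal ind * star U)
          = C - C * (U * diagonal ind * star U) := by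
        rw [Matrix.mul_sub, Matrix.mul_one]
      rw [hthis] at hD0
      exact (sub_eq_zero.mp hD0).symm
    refine ⟨C * (U * diagonal e * star U), ?_, ?_⟩
    · rw [specNorm_le_one_iff]
      have hUU : (C * (U * diagonal e * star U))ᵀ * (C * (U * diagonal e * star U))
          = (U * diagonal e * star U) * (Cᵀ * C) * (U * diagonal e * star U) := by
        rw [transpose_mul, hpvsym]
        simp only [Matrix.mul_assoc]
      have hexp2 : (U * diagonal e * star U) * (Q - Cᵀ * C) * (U * diagonal e * star U)
          = (U * diagonal e * star U) * Q * (U * diagonal e * star U)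
            - (U * diagonal e * star U) * (Cᵀ * C) * (U * diagonal e * star U) := by
        rw [Matrix.mul_sub (U * diagonal e * star U) Q (Cᵀ * C),
          Matrix.sub_mul ((U * diagonal e * star U) * Q)
            ((U * diagonal e * star U) * (Cᵀ * C)) (U * diagonal e * star U)]
      have hsplit : (1 : Matrix (Fin n) (Fin n) ℝ)
            - (C * (U * diagonal e * star U))ᵀ * (C * (U * diagonal e * star U))
          = (1 - U * diagonal ind * star U)
            + (U * diagonal e * star U) * (Q - Cᵀ * C) * (U * diagonal e * star U) := by
        rw [hUU, hexp2, hpvQpv]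
        abel
      rw [hsplit]
      apply h1PPSD.add
      have := hQC.mul_mul_conjTranspose_same (U * diagonal e * star U)
      rwa [conjTranspose_eq_transpose_of_trivial, hpvsym] at this
    · rw [Matrix.mul_assoc SA⁻¹ (C * (U * diagonal e * star U)) hQ.sqrt,
        Matrix.mul_assoc C (U * diagonal e * star U) hQ.sqrt, hpvS, hCP, hCdef,
        ← Matrix.mul_assoc, hSAinv1, Matrix.one_mul]
      abel
  · rintro ⟨Υ, hΥ, rfl⟩
    have hB : ζ + SA⁻¹ * Υ * hQ.sqrt - ζ = SA⁻¹ * Υ * hQ.sqrt := by abel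
    rw [hB]
    have hmid : SA⁻¹ * A * SA⁻¹ = 1 := by
      rw [← hSAmul, ← Matrix.mul_assoc, Matrix.mul_assoc SA⁻¹ SA SA, ← Matrix.mul_assoc,
        hSAinv1, Matrix.one_mul, hSAinv2]
    have hSsym : hQ.sqrtᵀ = hQ.sqrt := by
      rw [← conjTranspose_eq_transpose_of_trivial]; exact psd_sqrt_herm hQ
    have hBAB : (SA⁻¹ * Υ * hQ.sqrt)ᵀ * A * (SA⁻¹ * Υ * hQ.sqrt)
        = hQ.sqrt * (Υᵀ * Υ) * hQ.sqrt := by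
      rw [transpose_mul, transpose_mul, hSAinvT, hSsym]
      calc hQ.sqrt * (Υᵀ * SA⁻¹) * A * (SA⁻¹ * Υ * hQ.sqrt)
          = hQ.sqrt * (Υᵀ * (SA⁻¹ * (A * (SA⁻¹ * (Υ * hQ.sqrt))))) := by
            simp only [Matrix.mul_assoc]
        _ = hQ.sqrt * (Υᵀ * ((SA⁻¹ * A * SA⁻¹) * (Υ * hQ.sqrt))) := by
            simp only [Matrix.mul_assoc]
        _ = hQ.sqrt * (Υᵀ * (Υ * hQ.sqrt)) := by rw [hmid, Matrix.one_mul]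
        _ = hQ.sqrt * (Υᵀ * Υ) * hQ.sqrt := by simp only [Matrix.mul_assoc]
    rw [hBAB]
    have hQeq : Q = hQ.sqrt * hQ.sqrt := (psd_sqrt_mul_self hQ).symm
    have hfin : Q - hQ.sqrt * (Υᵀ * Υ) * hQ.sqrt
        = hQ.sqrt * (1 - Υᵀ * Υ) * hQ.sqrt := by
      rw [Matrix.mul_sub hQ.sqrt 1 (Υᵀ * Υ),
        Matrix.sub_mul (hQ.sqrt * 1) (hQ.sqrt * (Υᵀ * Υ)) hQ.sqrt, Matrix.mul_one, ← hQeq]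
    rw [hfin]
    have hPSD := (specNorm_le_one_iff Υ).mp hΥ
    have := hPSD.conjTranspose_mul_mul_same hQ.sqrt
    rwa [conjTranspose_eq_transpose_of_trivial, hSsym] at this
end

section
/- (Nonstrict Petersen-type scalarization.) Let M = M^⊤ ∈ ℝ^{q×q}, and let E ∈ ℝ^{q×p} with E ≠ 0 and F ∈ ℝ^{r×q} with F ≠ 0. Then M + EΥF + (EΥF)^⊤ ⪯ 0 for all Υ ∈ ℝ^{p×r} with ‖Υ‖ ≤ 1 if and only if there exists σ > 0 such that M + σ⁻¹ E E^⊤ + σ F^⊤ F ⪯ 0. -/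
open Matrix Kronecker

namespace PetersenAux


lemma norm_sq_eq_dot {n : Type*} [Fintype n] (v : n → ℝ) :
    ‖(WithLp.equiv 2 (n → ℝ)).symm v‖ ^ 2 = v ⬝ᵥ v := by
  rw [EuclideanSpace.norm_eq, Real.sq_sqrt (by positivity)]
  simp [dotProduct, sq]

lemma mulVec_dot_le_of_specNorm_le_one {m n : Type*} [Fintype m] [Fintype n] [DecidableEq n]
    {A : Matrix m n ℝ} (hA : specNorm A ≤ 1) (v : n → ℝ) :
    (A *ᵥ v) ⬝ᵥ (A *ᵥ v) ≤ v ⬝ᵥ v := by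
  have h1 : ‖LinearMap.toContinuousLinearMap (Matrix.toEuclideanLin A)
      ((WithLp.equiv 2 (n → ℝ)).symm v)‖ ≤ 1 * ‖(WithLp.equiv 2 (n → ℝ)).symm v‖ := by
    refine le_trans (ContinuousLinearMap.le_opNorm _ _) ?_
    gcongr
    exact hA
  rw [one_mul] at h1
  have h2 : LinearMap.toContinuousLinearMap (Matrix.toEuclideanLin A)
      ((WithLp.equiv 2 (n → ℝ)).symm v) = (WithLp.equiv 2 (m → ℝ)).symm (A *ᵥ v) := by
    simp [LinearMap.toContinuousLinearMap]
  rw [h2] at h1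
  rw [← norm_sq_eq_dot, ← norm_sq_eq_dot]
  exact pow_le_pow_left₀ (norm_nonneg _) h1 2

lemma specNorm_le_one {m n : Type*} [Fintype m] [Fintype n] [DecidableEq n]
    {A : Matrix m n ℝ} (h : ∀ v, (A *ᵥ v) ⬝ᵥ (A *ᵥ v) ≤ v ⬝ᵥ v) :
    specNorm A ≤ 1 := by
  apply ContinuousLinearMap.opNorm_le_bound _ zero_le_one
  intro x
  rw [one_mul]
  have h2 : LinearMap.toContinuousLinearMap (Matrix.toEuclideanLin A) x
      = (WithLp.equiv 2 (m → ℝ)).symm (A *ᵥ (WithLp.equiv 2 (n → ℝ) x)) := by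
    simp [LinearMap.toContinuousLinearMap, Matrix.toEuclideanLin_apply]
  rw [h2]
  have h3 := h (WithLp.equiv 2 (n → ℝ) x)
  rw [← norm_sq_eq_dot, ← norm_sq_eq_dot] at h3
  have h4 : ((WithLp.equiv 2 (n → ℝ)).symm (WithLp.equiv 2 (n → ℝ) x)) = x := by simp
  rw [h4] at h3
  nlinarith [norm_nonneg ((WithLp.equiv 2 (m → ℝ)).symm (A *ᵥ (WithLp.equiv 2 (n → ℝ)) x)),
    norm_nonneg x]

lemma dot_self_nonneg {n : Type*} [Fintype n] (v : n → ℝ) : 0 ≤ v ⬝ᵥ v :=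
  Finset.sum_nonneg fun _ _ => mul_self_nonneg _

lemma dot_self_pos {n : Type*} [Fintype n] {v : n → ℝ} (h : v ≠ 0) : 0 < v ⬝ᵥ v :=
  lt_of_le_of_ne (dot_self_nonneg v) fun h' => h (dotProduct_self_eq_zero.mp h'.symm)

lemma exists_mulVec_ne {m n : Type*} [Fintype m] [Fintype n] [DecidableEq n]
    {A : Matrix m n ℝ} (h : A ≠ 0) : ∃ v, A *ᵥ v ≠ 0 := by
  by_contra hc
  push_neg at hc
  apply h
  ext i j
  have := congr_fun (hc (Pi.single j 1)) i
  rw [Matrix.mulVec_single] at this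
  simpa using this

lemma dot_mulVec_eq {m n : Type*} [Fintype m] [Fintype n] (A : Matrix m n ℝ)
    (x : m → ℝ) (w : n → ℝ) : x ⬝ᵥ (A *ᵥ w) = (Aᵀ *ᵥ x) ⬝ᵥ w := by
  rw [Matrix.dotProduct_mulVec, Matrix.mulVec_transpose]

lemma quad_form_transpose {k : Type*} [Fintype k] (A : Matrix k k ℝ) (x : k → ℝ) :
    x ⬝ᵥ (Aᵀ *ᵥ x) = x ⬝ᵥ (A *ᵥ x) := by
  rw [dot_mulVec_eq, Matrix.transpose_transpose, dotProduct_comm]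

lemma herm_of_symm {k : Type*} [Fintype k] {N : Matrix k k ℝ} (h : Nᵀ = N) : N.IsHermitian := by
  show Nᴴ = N
  rw [Matrix.conjTranspose_eq_transpose_of_trivial]
  exact h

lemma dot_sq_le {n : Type*} [Fintype n] (v w : n → ℝ) :
    (v ⬝ᵥ w)^2 ≤ (v ⬝ᵥ v) * (w ⬝ᵥ w) := by
  simpa [dotProduct, pow_two] using Finset.sum_mul_sq_le_sq_mul_sq Finset.univ v w

lemma vecMulVec_mulVec {m n : Type*} [Fintype m] [Fintype n] (u : m → ℝ) (w : n → ℝ)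
    (v : n → ℝ) : (Matrix.vecMulVec u w) *ᵥ v = (w ⬝ᵥ v) • u := by
  ext i
  simp only [Matrix.mulVec, Matrix.vecMulVec_apply, dotProduct, Pi.smul_apply,
    smul_eq_mul, Finset.sum_mul]
  exact Finset.sum_congr rfl fun j _ => by ring


end PetersenAux

section Slemma

variable {V : Type*} [AddCommGroup V] [Module ℝ V]

def IsQuad (q : V → ℝ) (B : V → V → ℝ) : Prop :=
  ∀ (x y : V) (s t : ℝ), q (s • x + t • y) = s^2 * q x + 2*(s*t)* B x y + t^2 * q y

lemma IsQuad.smul {q : V → ℝ} {B : V → V → ℝ} (h : IsQuad q B) (s : ℝ) (x : V) :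
    q (s • x) = s^2 * q x := by
  have := h x 0 s 0
  simpa using this

lemma IsQuad.zero {q : V → ℝ} {B : V → V → ℝ} (h : IsQuad q B) : q 0 = 0 := by
  have := h.smul 0 0
  simpa using this

lemma dines_sum {q₁ q₂ : V → ℝ} {B₁ B₂ : V → V → ℝ} (h₁ : IsQuad q₁ B₁) (h₂ : IsQuad q₂ B₂)
    (x y : V) : ∃ z : V, q₁ z = q₁ x + q₁ y ∧ q₂ z = q₂ x + q₂ y := by
  set T₁ := q₁ x + q₁ y with hT₁def
  set T₂ := q₂ x + q₂ y with hT₂def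
  by_cases hT0 : T₁ = 0 ∧ T₂ = 0
  · exact ⟨0, by rw [h₁.zero, hT0.1], by rw [h₂.zero, hT0.2]⟩
  set g₁ : ℝ → ℝ := fun t => Real.cos t ^2 * q₁ x + 2*(Real.cos t * Real.sin t) * B₁ x y
      + Real.sin t ^2 * q₁ y with hg₁
  set g₂ : ℝ → ℝ := fun t => Real.cos t ^2 * q₂ x + 2*(Real.cos t * Real.sin t) * B₂ x y
      + Real.sin t ^2 * q₂ y with hg₂
  set h : ℝ → ℝ := fun t => g₁ t * T₂ - g₂ t * T₁ with hh
  set D := q₁ x * T₂ - q₂ x * T₁ with hD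
  have hcont : ContinuousOn h (Set.Icc 0 (Real.pi/2)) := by
    apply Continuous.continuousOn
    fun_prop
  have h0 : h 0 = D := by simp [hh, hg₁, hg₂, hD]
  have hpi : h (Real.pi/2) = -D := by
    simp only [hh, hg₁, hg₂, Real.cos_pi_div_two, Real.sin_pi_div_two, hD, hT₁def, hT₂def]
    ring
  have hpi2pos : (0:ℝ) ≤ Real.pi/2 := by positivity
  have hex : ∃ t₀ ∈ Set.Icc 0 (Real.pi/2), h t₀ = 0 := by
    rcases le_or_gt 0 D with hc | hc
    · have hmem : (0:ℝ) ∈ Set.Icc (h (Real.pi/2)) (h 0) := by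
        rw [h0, hpi]; exact ⟨by linarith, hc⟩
      obtain ⟨t₀, ht₀, ht₀'⟩ := intermediate_value_Icc' hpi2pos hcont hmem
      exact ⟨t₀, ht₀, ht₀'⟩
    · have hmem : (0:ℝ) ∈ Set.Icc (h 0) (h (Real.pi/2)) := by
        rw [h0, hpi]; exact ⟨le_of_lt hc, by linarith⟩
      obtain ⟨t₀, ht₀, ht₀'⟩ := intermediate_value_Icc hpi2pos hcont hmem
      exact ⟨t₀, ht₀, ht₀'⟩
  obtain ⟨t₀, _, hzero⟩ := hex
  set c0 := Real.cos t₀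
  set s0 := Real.sin t₀
  have pyth : s0^2 + c0^2 = 1 := Real.sin_sq_add_cos_sq t₀
  set z : V := c0 • x + s0 • y with hzdef
  set w : V := (-s0) • x + c0 • y with hwdef
  have hz1 : q₁ z = g₁ t₀ := by rw [hzdef, h₁ x y c0 s0]
  have hz2 : q₂ z = g₂ t₀ := by rw [hzdef, h₂ x y c0 s0]
  have hw1 : q₁ w + q₁ z = T₁ := by
    rw [hwdef, h₁ x y (-s0) c0, hz1, hg₁]
    simp only
    linear_combination (q₁ x + q₁ y) * pyth
  have hw2 : q₂ w + q₂ z = T₂ := by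
    rw [hwdef, h₂ x y (-s0) c0, hz2, hg₂]
    simp only
    linear_combination (q₂ x + q₂ y) * pyth
  have cross : g₁ t₀ * T₂ = g₂ t₀ * T₁ := by
    have h' := hzero
    rw [hh] at h'
    simp only at h'
    linarith
  have hc : ∃ c : ℝ, g₁ t₀ = c * T₁ ∧ g₂ t₀ = c * T₂ := by
    by_cases hT1 : T₁ = 0
    · have hT2 : T₂ ≠ 0 := fun h' => hT0 ⟨hT1, h'⟩
      refine ⟨g₂ t₀ / T₂, ?_, by field_simp⟩
      rw [hT1, mul_zero]
      have h'' : g₁ t₀ * T₂ = 0 := by rw [cross, hT1, mul_zero]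
      exact (mul_eq_zero.mp h'').resolve_right hT2
    · refine ⟨g₁ t₀ / T₁, by field_simp, ?_⟩
      have h'' : g₂ t₀ * T₁ = (g₁ t₀ / T₁) * T₂ * T₁ := by field_simp; linarith [cross]
      exact mul_right_cancel₀ hT1 h''
  obtain ⟨c, hc1, hc2⟩ := hc
  rcases lt_or_ge 0 c with hcpos | hcnp
  · refine ⟨(Real.sqrt c)⁻¹ • z, ?_, ?_⟩
    · rw [h₁.smul, inv_pow, Real.sq_sqrt hcpos.le, hz1, hc1]
      field_simp
    · rw [h₂.smul, inv_pow, Real.sq_sqrt hcpos.le, hz2, hc2]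
      field_simp
  · have hd : (0:ℝ) < 1 - c := by linarith
    have hw1' : q₁ w = (1-c) * T₁ := by rw [hz1, hc1] at hw1; linarith
    have hw2' : q₂ w = (1-c) * T₂ := by rw [hz2, hc2] at hw2; linarith
    refine ⟨(Real.sqrt (1-c))⁻¹ • w, ?_, ?_⟩
    · rw [h₁.smul, inv_pow, Real.sq_sqrt hd.le, hw1']
      field_simp
    · rw [h₂.smul, inv_pow, Real.sq_sqrt hd.le, hw2']
      field_simp

lemma slemma {q₁ q₂ : V → ℝ} {B₁ B₂ : V → V → ℝ}
    (h₁ : IsQuad q₁ B₁) (h₂ : IsQuad q₂ B₂)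
    (himp : ∀ z, 0 ≤ q₂ z → 0 ≤ q₁ z)
    (slater : ∃ z, 0 < q₂ z) :
    ∃ σ : ℝ, 0 ≤ σ ∧ ∀ z, σ * q₂ z ≤ q₁ z := by
  set R : Set (ℝ × ℝ) := Set.range (fun z : V => (q₁ z, q₂ z)) with hR
  have hRconv : Convex ℝ R := by
    rintro p ⟨zp, rfl⟩ pq ⟨zq, rfl⟩ a b ha hb hab
    obtain ⟨z, hz1, hz2⟩ := dines_sum h₁ h₂ (Real.sqrt a • zp) (Real.sqrt b • zq)
    rw [h₁.smul, h₁.smul, Real.sq_sqrt ha, Real.sq_sqrt hb] at hz1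
    rw [h₂.smul, h₂.smul, Real.sq_sqrt ha, Real.sq_sqrt hb] at hz2
    exact ⟨z, by simp [Prod.ext_iff, hz1, hz2, smul_eq_mul]⟩
  have hAconv : Convex ℝ ((Set.Iio (0:ℝ)) ×ˢ (Set.Ioi (0:ℝ))) :=
    (convex_Iio 0).prod (convex_Ioi 0)
  have hAopen : IsOpen ((Set.Iio (0:ℝ)) ×ˢ (Set.Ioi (0:ℝ))) :=
    (isOpen_Iio).prod isOpen_Ioi
  have hdisj : Disjoint ((Set.Iio (0:ℝ)) ×ˢ (Set.Ioi (0:ℝ))) R := by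
    rw [Set.disjoint_left]
    rintro ⟨u, v⟩ ⟨hu, hv⟩ ⟨z, hz⟩
    rw [Prod.ext_iff] at hz
    simp only at hz
    have h2 : 0 ≤ q₂ z := by rw [hz.2]; exact (le_of_lt hv)
    have := himp z h2
    rw [hz.1] at this
    exact absurd this (not_le.mpr hu)
  obtain ⟨f, s, hfA, hfR⟩ := geometric_hahn_banach_open hAconv hAopen hRconv hdisj
  set α := f (1, 0) with hα
  set β := f (0, 1) with hβ
  have hf : ∀ u v : ℝ, f (u, v) = u * α + v * β := by
    intro u v
    have huv : ((u, v) : ℝ × ℝ) = u • ((1:ℝ),(0:ℝ)) + v • ((0:ℝ),(1:ℝ)) := by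
      simp [Prod.ext_iff]
    rw [huv, map_add, _root_.map_smul, _root_.map_smul, smul_eq_mul, smul_eq_mul]
  have hs0 : s ≤ 0 := by
    have h0R : ((0:ℝ), (0:ℝ)) ∈ R := ⟨0, by simp [h₁.zero, h₂.zero]⟩
    have := hfR _ h0R
    rw [hf] at this
    linarith
  have hAlt : ∀ u v : ℝ, u < 0 → 0 < v → u * α + v * β < 0 := by
    intro u v hu hv
    have := hfA (u, v) ⟨hu, hv⟩
    rw [hf] at this
    linarith
  have hβ0 : β ≤ 0 := by
    by_contra hcon
    push_neg at hcon
    have := hAlt (-1) ((1 + |α|)/β) (by norm_num) (by positivity)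
    rw [div_mul_cancel₀ _ (ne_of_gt hcon)] at this
    have := abs_nonneg α
    have := le_abs_self α
    linarith
  have hα0 : 0 ≤ α := by
    by_contra hcon
    push_neg at hcon
    have hu : (1 + |β|)/α < 0 := div_neg_of_pos_of_neg (by positivity) hcon
    have := hAlt ((1 + |β|)/α) 1 hu one_pos
    rw [div_mul_cancel₀ _ (ne_of_lt hcon)] at this
    have := neg_abs_le β
    linarith
  have hpt : ∀ z, 0 ≤ α * q₁ z + β * q₂ z := by
    intro z
    by_contra hcon
    push_neg at hcon
    set d := -(α * q₁ z + β * q₂ z) with hd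
    have hdpos : 0 < d := by rw [hd]; linarith
    have hzR : ∀ t : ℝ, ((t^2 * q₁ z, t^2 * q₂ z) : ℝ × ℝ) ∈ R :=
      fun t => ⟨t • z, by simp [h₁.smul, h₂.smul]⟩
    set t := Real.sqrt ((|s| + 1)/d) with ht
    have h1 := hfR _ (hzR t)
    rw [hf] at h1
    have ht2 : t^2 = (|s| + 1)/d := Real.sq_sqrt (by positivity)
    have hdne : d ≠ 0 := ne_of_gt hdpos
    have hexp : t^2 * q₁ z * α + t^2 * q₂ z * β = -(|s| + 1) := by
      rw [ht2]
      field_simp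
      linear_combination (|s| + 1) * hd
    rw [hexp] at h1
    have h3 := le_abs_self s
    have h4 := neg_abs_le s
    linarith
  have hαpos : 0 < α := by
    rcases lt_or_eq_of_le hα0 with h | h
    · exact h
    · exfalso
      have hβne : β ≠ 0 := by
        intro hb0
        have := hAlt (-1) 1 (by norm_num) one_pos
        rw [← h, hb0] at this
        linarith
      have hβneg : β < 0 := lt_of_le_of_ne hβ0 hβne
      obtain ⟨z, hz⟩ := slater
      have := hpt z
      rw [← h] at this
      nlinarith
  refine ⟨-β/α, div_nonneg (by linarith) hαpos.le, ?_⟩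
  intro z
  have := hpt z
  rw [div_mul_eq_mul_div, div_le_iff₀ hαpos]
  nlinarith

end Slemma

theorem stmt11 (p q r : ℕ) (M : Matrix (Fin q) (Fin q) ℝ) (hM : M.IsHermitian)
    (E : Matrix (Fin q) (Fin p) ℝ) (hE : E ≠ 0)
    (F : Matrix (Fin r) (Fin q) ℝ) (hF : F ≠ 0) :
    (∀ Υ : Matrix (Fin p) (Fin r) ℝ, specNorm Υ ≤ 1 →
      (-(M + E * Υ * F + (E * Υ * F)ᵀ)).PosSemidef) ↔
    ∃ σ : ℝ, 0 < σ ∧ (-(M + σ⁻¹ • (E * Eᵀ) + σ • (Fᵀ * F))).PosSemidef := by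
  have hMt : Mᵀ = M := by
    rw [← Matrix.conjTranspose_eq_transpose_of_trivial]; exact hM
  constructor
  · intro hyp
    set q₁ : (Fin q → ℝ) × (Fin p → ℝ) → ℝ :=
      fun z => -(z.1 ⬝ᵥ (M *ᵥ z.1)) - 2 * ((Eᵀ *ᵥ z.1) ⬝ᵥ z.2) with hq₁def
    set q₂ : (Fin q → ℝ) × (Fin p → ℝ) → ℝ :=
      fun z => (F *ᵥ z.1) ⬝ᵥ (F *ᵥ z.1) - z.2 ⬝ᵥ z.2 with hq₂def
    have hq₁ : IsQuad q₁ (fun z z' => -(z.1 ⬝ᵥ (M *ᵥ z'.1))/2 - (z'.1 ⬝ᵥ (M *ᵥ z.1))/2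
        - ((Eᵀ *ᵥ z.1) ⬝ᵥ z'.2)/1 - ((Eᵀ *ᵥ z'.1) ⬝ᵥ z.2)) := by
      rintro ⟨x, u⟩ ⟨x', u'⟩ s t
      simp only [hq₁def, Prod.smul_mk, Prod.mk_add_mk, Matrix.mulVec_add, Matrix.mulVec_smul,
        dotProduct_add, add_dotProduct, dotProduct_smul,
        smul_dotProduct, smul_eq_mul]
      ring
    have hq₂ : IsQuad q₂ (fun z z' => ((F *ᵥ z.1) ⬝ᵥ (F *ᵥ z'.1))/2
        + ((F *ᵥ z'.1) ⬝ᵥ (F *ᵥ z.1))/2 - (z.2 ⬝ᵥ z'.2)/2 - (z'.2 ⬝ᵥ z.2)/2) := by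
      rintro ⟨x, u⟩ ⟨x', u'⟩ s t
      simp only [hq₂def, Prod.smul_mk, Prod.mk_add_mk, Matrix.mulVec_add, Matrix.mulVec_smul,
        dotProduct_add, add_dotProduct, dotProduct_smul,
        smul_dotProduct, smul_eq_mul]
      ring
    have himp : ∀ z, 0 ≤ q₂ z → 0 ≤ q₁ z := by
      rintro ⟨x, u⟩ hz
      simp only [hq₂def] at hz
      simp only [hq₁def]
      by_cases hFx : F *ᵥ x = 0
      · have hu : u = 0 := by
          rw [hFx] at hz
          simp only [zero_dotProduct, zero_sub, neg_nonneg] at hz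
          exact dotProduct_self_eq_zero.mp
            (le_antisymm hz (PetersenAux.dot_self_nonneg u))
        have h0 := (hyp 0 (by
          apply PetersenAux.specNorm_le_one
          intro v
          simp only [Matrix.zero_mulVec, zero_dotProduct]
          exact PetersenAux.dot_self_nonneg v)).dotProduct_mulVec_nonneg x
        rw [star_trivial] at h0
        simp only [Matrix.mul_zero, Matrix.zero_mul, Matrix.transpose_zero, add_zero,
          Matrix.neg_mulVec, dotProduct_neg] at h0
        rw [hu]
        simp only [dotProduct_zero, mul_zero, sub_zero]
        linarith
      · set w := F *ᵥ x with hwdef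
        set c2 := w ⬝ᵥ w with hc2def
        have hc2 : 0 < c2 := PetersenAux.dot_self_pos hFx
        have huu : u ⬝ᵥ u ≤ c2 := by linarith
        set Υ : Matrix (Fin p) (Fin r) ℝ := c2⁻¹ • Matrix.vecMulVec u w with hΥdef
        have hmul : ∀ v, Υ *ᵥ v = (c2⁻¹ * (w ⬝ᵥ v)) • u := by
          intro v
          rw [hΥdef, Matrix.smul_mulVec, PetersenAux.vecMulVec_mulVec, smul_smul]
        have hΥ : specNorm Υ ≤ 1 := by
          apply PetersenAux.specNorm_le_one
          intro v
          rw [hmul, smul_dotProduct, dotProduct_smul, smul_eq_mul, smul_eq_mul]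
          have hcs := PetersenAux.dot_sq_le w v
          have hvv := PetersenAux.dot_self_nonneg v
          have huu0 := PetersenAux.dot_self_nonneg u
          have h1 : c2⁻¹ * (w ⬝ᵥ v) * (c2⁻¹ * (w ⬝ᵥ v) * (u ⬝ᵥ u))
              = (w ⬝ᵥ v)^2 * (u ⬝ᵥ u) * c2⁻¹ * c2⁻¹ := by ring
          have h2 : (w ⬝ᵥ v)^2 * (u ⬝ᵥ u) ≤ (c2 * (v ⬝ᵥ v)) * c2 := by
            calc (w ⬝ᵥ v)^2 * (u ⬝ᵥ u) ≤ ((w ⬝ᵥ w) * (v ⬝ᵥ v)) * (u ⬝ᵥ u) := by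
                  apply mul_le_mul_of_nonneg_right hcs huu0
            _ ≤ ((w ⬝ᵥ w) * (v ⬝ᵥ v)) * c2 := by
                  apply mul_le_mul_of_nonneg_left huu (by positivity)
            _ = (c2 * (v ⬝ᵥ v)) * c2 := by rw [← hc2def]
          rw [h1]
          calc (w ⬝ᵥ v)^2 * (u ⬝ᵥ u) * c2⁻¹ * c2⁻¹ ≤ ((c2 * (v ⬝ᵥ v)) * c2) * c2⁻¹ * c2⁻¹ := by
                gcongr
          _ = v ⬝ᵥ v := by field_simp
        have hp := (hyp Υ hΥ).dotProduct_mulVec_nonneg x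
        rw [star_trivial] at hp
        have hux : Υ *ᵥ (F *ᵥ x) = u := by
          rw [hmul, ← hwdef, ← hc2def, inv_mul_cancel₀ (ne_of_gt hc2), one_smul]
        have hterm : x ⬝ᵥ ((E * Υ * F) *ᵥ x) = (Eᵀ *ᵥ x) ⬝ᵥ u := by
          rw [← Matrix.mulVec_mulVec, ← Matrix.mulVec_mulVec, hux,
            PetersenAux.dot_mulVec_eq]
        rw [Matrix.neg_mulVec, dotProduct_neg, Matrix.add_mulVec, Matrix.add_mulVec,
          dotProduct_add, dotProduct_add,
          PetersenAux.quad_form_transpose, hterm] at hp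
        linarith
    obtain ⟨xF, hxF⟩ := PetersenAux.exists_mulVec_ne hF
    have slater : ∃ z : (Fin q → ℝ) × (Fin p → ℝ), 0 < q₂ z := by
      refine ⟨(xF, 0), ?_⟩
      simp only [hq₂def]
      simpa using PetersenAux.dot_self_pos hxF
    obtain ⟨σ, hσ0, hσ⟩ := slemma hq₁ hq₂ himp slater
    have hEt : Eᵀ ≠ 0 := by rwa [Ne, Matrix.transpose_eq_zero]
    obtain ⟨xE, hxE⟩ := PetersenAux.exists_mulVec_ne hEt
    have hσpos : 0 < σ := by
      rcases lt_or_eq_of_le hσ0 with h | h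
      · exact h
      · exfalso
        set b2 := (Eᵀ *ᵥ xE) ⬝ᵥ (Eᵀ *ᵥ xE) with hb2def
        have hb2 : 0 < b2 := PetersenAux.dot_self_pos hxE
        set a0 := xE ⬝ᵥ (M *ᵥ xE) with ha0def
        set t : ℝ := (|a0| + 1)/(2*b2) with htdef
        have := hσ (xE, t • (Eᵀ *ᵥ xE))
        rw [← h, zero_mul] at this
        simp only [hq₁def, dotProduct_smul, smul_eq_mul] at this
        rw [← ha0def, ← hb2def] at this
        have ht : t * b2 = (|a0| + 1)/2 := by rw [htdef]; field_simp
        have habs := le_abs_self a0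
        have habs2 := neg_abs_le a0
        nlinarith
    refine ⟨σ, hσpos, ?_⟩
    refine Matrix.PosSemidef.of_dotProduct_mulVec_nonneg ?_ ?_
    · apply PetersenAux.herm_of_symm
      rw [Matrix.transpose_neg, Matrix.transpose_add, Matrix.transpose_add,
        Matrix.transpose_smul, Matrix.transpose_smul, Matrix.transpose_mul,
        Matrix.transpose_mul, Matrix.transpose_transpose, Matrix.transpose_transpose, hMt]
    · intro x
      rw [star_trivial]
      have hz := hσ (x, σ⁻¹ • (Eᵀ *ᵥ x))
      simp only [hq₁def, hq₂def, dotProduct_smul, smul_dotProduct,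
        smul_eq_mul] at hz
      set b2 := (Eᵀ *ᵥ x) ⬝ᵥ (Eᵀ *ᵥ x) with hb2def
      set c2 := (F *ᵥ x) ⬝ᵥ (F *ᵥ x) with hc2def
      set a := x ⬝ᵥ (M *ᵥ x) with hadef
      have hEEt : x ⬝ᵥ ((E * Eᵀ) *ᵥ x) = b2 := by
        rw [← Matrix.mulVec_mulVec, PetersenAux.dot_mulVec_eq]
      have hFtF : x ⬝ᵥ ((Fᵀ * F) *ᵥ x) = c2 := by
        rw [← Matrix.mulVec_mulVec, PetersenAux.dot_mulVec_eq, Matrix.transpose_transpose]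
      rw [Matrix.neg_mulVec, dotProduct_neg, Matrix.add_mulVec, Matrix.add_mulVec,
        dotProduct_add, dotProduct_add, Matrix.smul_mulVec,
        Matrix.smul_mulVec, dotProduct_smul, dotProduct_smul,
        smul_eq_mul, smul_eq_mul, hEEt, hFtF, ← hadef]
      have hred : σ * (c2 - σ⁻¹ * (σ⁻¹ * b2)) = σ * c2 - σ⁻¹ * b2 := by
        field_simp
      rw [hred] at hz
      linarith
  · rintro ⟨σ, hσpos, hPSD⟩ Υ hΥ
    refine Matrix.PosSemidef.of_dotProduct_mulVec_nonneg ?_ ?_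
    · apply PetersenAux.herm_of_symm
      rw [Matrix.transpose_neg, Matrix.transpose_add, Matrix.transpose_add,
        Matrix.transpose_transpose, hMt]
      rw [add_assoc, add_assoc, add_comm (E * Υ * F)]
    · intro x
      rw [star_trivial]
      have hquad := hPSD.dotProduct_mulVec_nonneg x
      rw [star_trivial] at hquad
      set b2 := (Eᵀ *ᵥ x) ⬝ᵥ (Eᵀ *ᵥ x) with hb2def
      set c2 := (F *ᵥ x) ⬝ᵥ (F *ᵥ x) with hc2def
      set a := x ⬝ᵥ (M *ᵥ x) with hadef
      have hEEt : x ⬝ᵥ ((E * Eᵀ) *ᵥ x) = b2 := by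
        rw [← Matrix.mulVec_mulVec, PetersenAux.dot_mulVec_eq]
      have hFtF : x ⬝ᵥ ((Fᵀ * F) *ᵥ x) = c2 := by
        rw [← Matrix.mulVec_mulVec, PetersenAux.dot_mulVec_eq, Matrix.transpose_transpose]
      rw [Matrix.neg_mulVec, dotProduct_neg, Matrix.add_mulVec, Matrix.add_mulVec,
        dotProduct_add, dotProduct_add, Matrix.smul_mulVec,
        Matrix.smul_mulVec, dotProduct_smul, dotProduct_smul,
        smul_eq_mul, smul_eq_mul, hEEt, hFtF, ← hadef] at hquad
      set u := Υ *ᵥ (F *ᵥ x) with hudef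
      have huu : u ⬝ᵥ u ≤ c2 := PetersenAux.mulVec_dot_le_of_specNorm_le_one hΥ (F *ᵥ x)
      have hcs : ((Eᵀ *ᵥ x) ⬝ᵥ u)^2 ≤ b2 * (u ⬝ᵥ u) := PetersenAux.dot_sq_le _ _
      have hterm : x ⬝ᵥ ((E * Υ * F) *ᵥ x) = (Eᵀ *ᵥ x) ⬝ᵥ u := by
        rw [← Matrix.mulVec_mulVec, ← Matrix.mulVec_mulVec, ← hudef,
          PetersenAux.dot_mulVec_eq]
      rw [Matrix.neg_mulVec, dotProduct_neg, Matrix.add_mulVec, Matrix.add_mulVec,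
        dotProduct_add, dotProduct_add, PetersenAux.quad_form_transpose,
        hterm, ← hadef]
      have hb2n : 0 ≤ b2 := PetersenAux.dot_self_nonneg _
      have hc2n : 0 ≤ c2 := PetersenAux.dot_self_nonneg _
      have huun : 0 ≤ u ⬝ᵥ u := PetersenAux.dot_self_nonneg _
      have htbc : ((Eᵀ *ᵥ x) ⬝ᵥ u)^2 ≤ b2 * c2 :=
        le_trans hcs (mul_le_mul_of_nonneg_left huu hb2n)
      have hinv : σ * σ⁻¹ = 1 := mul_inv_cancel₀ (ne_of_gt hσpos)
      have hσinv : 0 < σ⁻¹ := inv_pos.mpr hσpos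
      have h2t : 2 * ((Eᵀ *ᵥ x) ⬝ᵥ u) ≤ σ⁻¹ * b2 + σ * c2 := by
        nlinarith [sq_nonneg (σ⁻¹ * b2 - σ * c2), htbc, hinv, hb2n, hc2n, hσpos, hσinv,
          mul_nonneg (le_of_lt hσinv) hb2n, mul_nonneg (le_of_lt hσpos) hc2n,
          sq_nonneg (σ⁻¹ * b2 + σ * c2 - 2 * ((Eᵀ *ᵥ x) ⬝ᵥ u))]
      linarith
end

section
/- (Strict Petersen's lemma.) Let M = M^⊤ ∈ ℝ^{q×q}, E ∈ ℝ^{q×p}, F ∈ ℝ^{r×q}. Then M + EΥF + (EΥF)^⊤ ≺ 0 for all Υ ∈ ℝ^{p×r} with ‖Υ‖ ≤ 1 if and only if there exists λ > 0 such that M + λ⁻¹ E E^⊤ + λ F^⊤ F ≺ 0. -/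
open Matrix Kronecker

namespace Petersen

/-- Euclidean norm of a plain vector. -/
noncomputable def en {n : ℕ} (v : Fin n → ℝ) : ℝ := Real.sqrt (v ⬝ᵥ v)

/-- Quadratic form of a matrix. -/
def qf {n : ℕ} (A : Matrix (Fin n) (Fin n) ℝ) (x : Fin n → ℝ) : ℝ := x ⬝ᵥ (A *ᵥ x)

lemma dot_self_nonneg {n : ℕ} (v : Fin n → ℝ) : 0 ≤ v ⬝ᵥ v :=
  Finset.sum_nonneg fun _ _ => mul_self_nonneg _

lemma dot_self_eq_zero_iff {n : ℕ} (v : Fin n → ℝ) : v ⬝ᵥ v = 0 ↔ v = 0 := by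
  constructor
  · intro h
    funext i
    have h2 := (Finset.sum_eq_zero_iff_of_nonneg (fun i _ => mul_self_nonneg (v i))).mp h i
      (Finset.mem_univ i)
    have := mul_self_eq_zero.mp h2
    simpa using this
  · intro h; rw [h]; simp [dotProduct]

lemma dot_self_pos {n : ℕ} {v : Fin n → ℝ} (hv : v ≠ 0) : 0 < v ⬝ᵥ v :=
  lt_of_le_of_ne (dot_self_nonneg v) (fun h => hv ((dot_self_eq_zero_iff v).mp h.symm))

lemma en_nonneg {n : ℕ} (v : Fin n → ℝ) : 0 ≤ en v := Real.sqrt_nonneg _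

lemma en_sq {n : ℕ} (v : Fin n → ℝ) : en v ^ 2 = v ⬝ᵥ v := Real.sq_sqrt (dot_self_nonneg v)

lemma en_eq_norm {n : ℕ} (v : Fin n → ℝ) : en v = ‖(WithLp.equiv 2 (Fin n → ℝ)).symm v‖ := by
  rw [EuclideanSpace.norm_eq]
  unfold en dotProduct
  congr 1
  apply Finset.sum_congr rfl
  intro i _
  rw [WithLp.equiv_symm_apply, WithLp.ofLp_toLp, Real.norm_eq_abs, sq_abs, sq]

lemma abs_dot_le {n : ℕ} (u v : Fin n → ℝ) : |u ⬝ᵥ v| ≤ en u * en v := by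
  have h : u ⬝ᵥ v = (inner ℝ ((WithLp.equiv 2 (Fin n → ℝ)).symm u)
      ((WithLp.equiv 2 (Fin n → ℝ)).symm v) : ℝ) := by
    rw [PiLp.inner_apply]
    apply Finset.sum_congr rfl
    intro i _
    rw [WithLp.equiv_symm_apply]
    simp [mul_comm]
  rw [h, en_eq_norm, en_eq_norm]
  exact abs_real_inner_le_norm _ _

lemma en_smul {n : ℕ} (c : ℝ) (v : Fin n → ℝ) : en (c • v) = |c| * en v := by
  unfold en
  rw [smul_dotProduct, dotProduct_smul, smul_eq_mul, smul_eq_mul, ← mul_assoc,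
    Real.sqrt_mul (mul_self_nonneg c), Real.sqrt_mul_self_eq_abs]

lemma en_mulVec_le {m n : ℕ} (A : Matrix (Fin m) (Fin n) ℝ) (h : specNorm A ≤ 1)
    (v : Fin n → ℝ) : en (A *ᵥ v) ≤ en v := by
  have key : (LinearMap.toContinuousLinearMap (Matrix.toEuclideanLin A))
      ((WithLp.equiv 2 (Fin n → ℝ)).symm v) = (WithLp.equiv 2 (Fin m → ℝ)).symm (A *ᵥ v) := by
    rw [LinearMap.coe_toContinuousLinearMap']
    exact Matrix.toEuclideanLin_apply_piLp_toLp A v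
  have h2 := (LinearMap.toContinuousLinearMap (Matrix.toEuclideanLin A)).le_opNorm
      ((WithLp.equiv 2 (Fin n → ℝ)).symm v)
  rw [key] at h2
  rw [en_eq_norm, en_eq_norm]
  calc ‖(WithLp.equiv 2 (Fin m → ℝ)).symm (A *ᵥ v)‖ ≤ _ := h2
    _ ≤ 1 * ‖(WithLp.equiv 2 (Fin n → ℝ)).symm v‖ :=
        mul_le_mul_of_nonneg_right h (norm_nonneg _)
    _ = _ := one_mul _

lemma specNorm_le {m n : ℕ} (A : Matrix (Fin m) (Fin n) ℝ) (C : ℝ) (hC : 0 ≤ C)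
    (h : ∀ v : Fin n → ℝ, en (A *ᵥ v) ≤ C * en v) : specNorm A ≤ C := by
  apply ContinuousLinearMap.opNorm_le_bound _ hC
  intro x
  have hx : x = (WithLp.equiv 2 (Fin n → ℝ)).symm ((WithLp.equiv 2 (Fin n → ℝ)) x) := rfl
  rw [hx]
  have key : (LinearMap.toContinuousLinearMap (Matrix.toEuclideanLin A))
      ((WithLp.equiv 2 (Fin n → ℝ)).symm ((WithLp.equiv 2 (Fin n → ℝ)) x)) =
      (WithLp.equiv 2 (Fin m → ℝ)).symm (A *ᵥ ((WithLp.equiv 2 (Fin n → ℝ)) x)) := by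
    rw [LinearMap.coe_toContinuousLinearMap']
    exact Matrix.toEuclideanLin_apply_piLp_toLp A _
  rw [key, ← en_eq_norm, ← en_eq_norm]
  exact h _

lemma vecMulVec_mulVec' {p r : ℕ} (u : Fin p → ℝ) (w : Fin r → ℝ) (v : Fin r → ℝ) :
    (vecMulVec u w) *ᵥ v = (w ⬝ᵥ v) • u := by
  funext i
  simp [mulVec, vecMulVec_apply, dotProduct, Finset.mul_sum, mul_comm, mul_left_comm, mul_assoc]

/-- Quadratic form of `E * Y * F`. -/
lemma qf_EYF {p q r : ℕ} (E : Matrix (Fin q) (Fin p) ℝ) (Y : Matrix (Fin p) (Fin r) ℝ)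
    (F : Matrix (Fin r) (Fin q) ℝ) (x : Fin q → ℝ) :
    x ⬝ᵥ ((E * Y * F) *ᵥ x) = (Eᵀ *ᵥ x) ⬝ᵥ (Y *ᵥ (F *ᵥ x)) := by
  rw [← mulVec_mulVec, ← mulVec_mulVec, dotProduct_mulVec x E, mulVec_transpose]

lemma qf_transpose {q : ℕ} (A : Matrix (Fin q) (Fin q) ℝ) (x : Fin q → ℝ) :
    x ⬝ᵥ (Aᵀ *ᵥ x) = x ⬝ᵥ (A *ᵥ x) := by
  rw [mulVec_transpose, dotProduct_comm, dotProduct_mulVec]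

lemma qf_EEt {p q : ℕ} (E : Matrix (Fin q) (Fin p) ℝ) (x : Fin q → ℝ) :
    x ⬝ᵥ ((E * Eᵀ) *ᵥ x) = (Eᵀ *ᵥ x) ⬝ᵥ (Eᵀ *ᵥ x) := by
  rw [← mulVec_mulVec, dotProduct_mulVec x E, mulVec_transpose]

lemma qf_FtF {q r : ℕ} (F : Matrix (Fin r) (Fin q) ℝ) (x : Fin q → ℝ) :
    x ⬝ᵥ ((Fᵀ * F) *ᵥ x) = (F *ᵥ x) ⬝ᵥ (F *ᵥ x) := by
  rw [← mulVec_mulVec, dotProduct_mulVec x Fᵀ, vecMul_transpose]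

/-- Full quadratic form expansion for the uncertain matrix. -/
lemma qf_main {p q r : ℕ} (M : Matrix (Fin q) (Fin q) ℝ) (E : Matrix (Fin q) (Fin p) ℝ)
    (Y : Matrix (Fin p) (Fin r) ℝ) (F : Matrix (Fin r) (Fin q) ℝ) (x : Fin q → ℝ) :
    x ⬝ᵥ ((M + E * Y * F + (E * Y * F)ᵀ) *ᵥ x) =
      x ⬝ᵥ (M *ᵥ x) + 2 * ((Eᵀ *ᵥ x) ⬝ᵥ (Y *ᵥ (F *ᵥ x))) := by
  rw [add_mulVec, add_mulVec, dotProduct_add, dotProduct_add, qf_transpose, qf_EYF]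
  ring

lemma qf_lam {p q r : ℕ} (M : Matrix (Fin q) (Fin q) ℝ) (E : Matrix (Fin q) (Fin p) ℝ)
    (F : Matrix (Fin r) (Fin q) ℝ) (c d : ℝ) (x : Fin q → ℝ) :
    x ⬝ᵥ ((M + c • (E * Eᵀ) + d • (Fᵀ * F)) *ᵥ x) =
      x ⬝ᵥ (M *ᵥ x) + c * ((Eᵀ *ᵥ x) ⬝ᵥ (Eᵀ *ᵥ x)) + d * ((F *ᵥ x) ⬝ᵥ (F *ᵥ x)) := by
  rw [add_mulVec, add_mulVec, dotProduct_add, dotProduct_add, smul_mulVec,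
    smul_mulVec, dotProduct_smul, dotProduct_smul, qf_EEt, qf_FtF, smul_eq_mul, smul_eq_mul]

lemma neg_posDef_qf {q : ℕ} {A : Matrix (Fin q) (Fin q) ℝ} (h : (-A).PosDef)
    {x : Fin q → ℝ} (hx : x ≠ 0) : x ⬝ᵥ (A *ᵥ x) < 0 := by
  have := h.dotProduct_mulVec_pos hx
  rw [star_trivial, neg_mulVec, dotProduct_neg] at this
  linarith

lemma neg_posDef_of {q : ℕ} {A : Matrix (Fin q) (Fin q) ℝ} (hA : A.IsHermitian)
    (h : ∀ x : Fin q → ℝ, x ≠ 0 → x ⬝ᵥ (A *ᵥ x) < 0) : (-A).PosDef := by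
  refine Matrix.PosDef.of_dotProduct_mulVec_pos ?_ ?_
  · exact hA.neg
  · intro x hx
    rw [star_trivial, neg_mulVec, dotProduct_neg]
    linarith [h x hx]

lemma herm_main {q : ℕ} (M : Matrix (Fin q) (Fin q) ℝ) (hM : M.IsHermitian)
    (X : Matrix (Fin q) (Fin q) ℝ) : (M + X + Xᵀ).IsHermitian := by
  have hMt : Mᵀ = M := by rw [← conjTranspose_eq_transpose_of_trivial]; exact hM
  unfold Matrix.IsHermitian
  rw [conjTranspose_eq_transpose_of_trivial, transpose_add, transpose_add,
    transpose_transpose, hMt]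
  abel

lemma herm_lam {p q r : ℕ} (M : Matrix (Fin q) (Fin q) ℝ) (hM : M.IsHermitian)
    (E : Matrix (Fin q) (Fin p) ℝ) (F : Matrix (Fin r) (Fin q) ℝ) (c d : ℝ) :
    (M + c • (E * Eᵀ) + d • (Fᵀ * F)).IsHermitian := by
  have hMt : Mᵀ = M := by rw [← conjTranspose_eq_transpose_of_trivial]; exact hM
  unfold Matrix.IsHermitian
  rw [conjTranspose_eq_transpose_of_trivial, transpose_add, transpose_add, transpose_smul,
    transpose_smul, transpose_mul, transpose_mul, transpose_transpose, transpose_transpose, hMt]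


section Directions

variable {p q r : ℕ}

/-- Backward (easy) direction. -/
lemma backward (M : Matrix (Fin q) (Fin q) ℝ) (hM : M.IsHermitian)
    (E : Matrix (Fin q) (Fin p) ℝ) (F : Matrix (Fin r) (Fin q) ℝ)
    (lam : ℝ) (hlam : 0 < lam)
    (h : (-(M + lam⁻¹ • (E * Eᵀ) + lam • (Fᵀ * F))).PosDef)
    (Y : Matrix (Fin p) (Fin r) ℝ) (hY : specNorm Y ≤ 1) :
    (-(M + E * Y * F + (E * Y * F)ᵀ)).PosDef := by
  apply neg_posDef_of (herm_main M hM _)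
  intro x hx
  rw [qf_main]
  set u := Eᵀ *ᵥ x with hu
  set w := F *ᵥ x with hw
  have hN := neg_posDef_qf h hx
  rw [qf_lam] at hN
  have h1 : u ⬝ᵥ (Y *ᵥ w) ≤ en u * en w := by
    calc u ⬝ᵥ (Y *ᵥ w) ≤ |u ⬝ᵥ (Y *ᵥ w)| := le_abs_self _
      _ ≤ en u * en (Y *ᵥ w) := abs_dot_le _ _
      _ ≤ en u * en w := mul_le_mul_of_nonneg_left (en_mulVec_le Y hY w) (en_nonneg u)
  have h2 : 2 * (en u * en w) ≤ lam⁻¹ * (u ⬝ᵥ u) + lam * (w ⬝ᵥ w) := by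
    have hsq := sq_nonneg (en u - lam * en w)
    have h3 : 0 ≤ lam⁻¹ * (en u - lam * en w) ^ 2 :=
      mul_nonneg (inv_pos.mpr hlam).le hsq
    have expand : lam⁻¹ * (en u - lam * en w) ^ 2 =
        lam⁻¹ * (en u) ^ 2 - 2 * (en u * en w) + lam * (en w) ^ 2 := by
      field_simp
      ring
    rw [expand, en_sq, en_sq] at h3
    linarith
  nlinarith [h1, h2, hN]

/-- Step 1: the strict scalar inequality from the robust hypothesis. -/
lemma step1 (M : Matrix (Fin q) (Fin q) ℝ)
    (E : Matrix (Fin q) (Fin p) ℝ) (F : Matrix (Fin r) (Fin q) ℝ)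
    (H : ∀ Y : Matrix (Fin p) (Fin r) ℝ, specNorm Y ≤ 1 →
      (-(M + E * Y * F + (E * Y * F)ᵀ)).PosDef)
    (x : Fin q → ℝ) (hx : x ≠ 0) :
    x ⬝ᵥ (M *ᵥ x) + 2 * (en (Eᵀ *ᵥ x) * en (F *ᵥ x)) < 0 := by
  set u := Eᵀ *ᵥ x with hu
  set w := F *ᵥ x with hw
  set a := en u with ha
  set b := en w with hb
  have ha0 : 0 ≤ a := en_nonneg u
  have hb0 : 0 ≤ b := en_nonneg w
  by_cases hab : a * b = 0
  · -- use Y = 0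
    have h0 : specNorm (0 : Matrix (Fin p) (Fin r) ℝ) ≤ 1 := by
      apply le_trans (specNorm_le 0 0 le_rfl ?_) zero_le_one
      intro v
      rw [zero_mulVec]
      simp [en, dotProduct]
    have := neg_posDef_qf (H 0 h0) hx
    rw [qf_main] at this
    rw [hab]
    simpa using this
  · push_neg at hab
    have haa : 0 < a := lt_of_le_of_ne ha0 (by
      intro h; exact hab (by rw [← h]; ring))
    have hbb : 0 < b := by
      rcases lt_or_eq_of_le hb0 with h | h
      · exact h
      · exact absurd (by rw [← h]; ring) hab
    set Y := (a * b)⁻¹ • vecMulVec u w with hY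
    have hYnorm : specNorm Y ≤ 1 := by
      apply specNorm_le Y 1 zero_le_one
      intro v
      rw [one_mul, hY, smul_mulVec, vecMulVec_mulVec', smul_smul, en_smul]
      have : |(a * b)⁻¹ * (w ⬝ᵥ v)| ≤ (a * b)⁻¹ * (b * en v) := by
        rw [abs_mul, abs_of_nonneg (by positivity : (0:ℝ) ≤ (a * b)⁻¹)]
        apply mul_le_mul_of_nonneg_left _ (by positivity)
        calc |w ⬝ᵥ v| ≤ en w * en v := abs_dot_le _ _
          _ = b * en v := by rw [hb]
      calc |(a * b)⁻¹ * (w ⬝ᵥ v)| * a ≤ (a * b)⁻¹ * (b * en v) * a :=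
            mul_le_mul_of_nonneg_right this ha0
        _ = en v := by field_simp
    have := neg_posDef_qf (H Y hYnorm) hx
    rw [qf_main] at this
    have hq : u ⬝ᵥ (Y *ᵥ w) = a * b := by
      rw [hY, smul_mulVec, vecMulVec_mulVec', dotProduct_smul, dotProduct_smul,
        smul_eq_mul, smul_eq_mul]
      have e1 : u ⬝ᵥ u = a ^ 2 := (en_sq u).symm
      have e2 : w ⬝ᵥ w = b ^ 2 := (en_sq w).symm
      rw [e1, e2]
      field_simp
    rw [hq] at this
    linarith

end Directions

section Analysis

variable {p q r : ℕ}

lemma qf_smul {n : ℕ} (A : Matrix (Fin n) (Fin n) ℝ) (c : ℝ) (x : Fin n → ℝ) :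
    qf A (c • x) = c ^ 2 * qf A x := by
  unfold qf
  rw [mulVec_smul, dotProduct_smul, smul_dotProduct, smul_eq_mul, smul_eq_mul]
  ring

lemma continuous_qf {n : ℕ} (A : Matrix (Fin n) (Fin n) ℝ) : Continuous (qf A) := by
  unfold qf dotProduct mulVec
  apply continuous_finset_sum
  intro i _
  exact (continuous_apply i).mul (continuous_finset_sum _ fun j _ =>
    continuous_const.mul (continuous_apply j))

lemma continuous_dotself {n : ℕ} : Continuous (fun v : Fin n → ℝ => v ⬝ᵥ v) := by
  unfold dotProduct
  exact continuous_finset_sum _ fun i _ => (continuous_apply i).mul (continuous_apply i)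

lemma isCompact_sphere' {n : ℕ} : IsCompact {x : Fin n → ℝ | x ⬝ᵥ x = 1} := by
  apply Metric.isCompact_of_isClosed_isBounded
  · exact isClosed_eq continuous_dotself continuous_const
  · apply Bornology.IsBounded.subset (Metric.isBounded_closedBall (x := (0 : Fin n → ℝ)) (r := 1))
    intro x hx
    simp only [Metric.mem_closedBall, dist_zero_right]
    rcases Nat.eq_zero_or_pos n with hn | hn
    · have : x = 0 := by funext i; exact absurd i.2 (by omega)
      rw [this]; simp
    · rw [pi_norm_le_iff_of_nonneg zero_le_one]
      intro i
      rw [Real.norm_eq_abs, abs_le]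
      have h1 : x i * x i ≤ 1 := by
        have : x i * x i ≤ x ⬝ᵥ x := by
          unfold dotProduct
          exact Finset.single_le_sum (f := fun j => x j * x j)
            (fun j _ => mul_self_nonneg _) (Finset.mem_univ i)
        rw [hx] at this; exact this
      constructor <;> nlinarith

lemma exists_max {n : ℕ} (s : Set (Fin n → ℝ)) (hs : IsCompact s) (hne : s.Nonempty)
    (g : (Fin n → ℝ) → ℝ) (hg : Continuous g) : ∃ x ∈ s, ∀ y ∈ s, g y ≤ g x := by
  obtain ⟨x, hx, hmax⟩ := hs.exists_isMaxOn hne hg.continuousOn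
  exact ⟨x, hx, fun y hy => hmax hy⟩

lemma en_one {n : ℕ} {x : Fin n → ℝ} (hx : x ⬝ᵥ x = 1) : en x = 1 := by
  unfold en; rw [hx, Real.sqrt_one]

lemma smul_dot_smul {n : ℕ} (c : ℝ) (x : Fin n → ℝ) :
    (c • x) ⬝ᵥ (c • x) = c ^ 2 * (x ⬝ᵥ x) := by
  rw [smul_dotProduct, dotProduct_smul, smul_eq_mul, smul_eq_mul]; ring

lemma inv_sqrt_sq {d : ℝ} (hd : 0 < d) : ((Real.sqrt d)⁻¹) ^ 2 * d = 1 := by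
  rw [inv_pow, Real.sq_sqrt hd.le, inv_mul_cancel₀ hd.ne']

lemma normalize_unit {n : ℕ} {x : Fin n → ℝ} (hx : x ≠ 0) :
    ((Real.sqrt (x ⬝ᵥ x))⁻¹ • x) ⬝ᵥ ((Real.sqrt (x ⬝ᵥ x))⁻¹ • x) = 1 := by
  rw [smul_dot_smul]
  exact inv_sqrt_sq (dot_self_pos hx)

lemma posdef_of_sphere {n : ℕ} (A : Matrix (Fin n) (Fin n) ℝ) (hA : A.IsHermitian)
    (h : ∀ x : Fin n → ℝ, x ⬝ᵥ x = 1 → qf A x < 0) : (-A).PosDef := by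
  apply neg_posDef_of hA
  intro x hx
  have hd : 0 < x ⬝ᵥ x := dot_self_pos hx
  set c : ℝ := (Real.sqrt (x ⬝ᵥ x))⁻¹ with hc
  have hcpos : 0 < c := inv_pos.mpr (Real.sqrt_pos.mpr hd)
  have hy : (c • x) ⬝ᵥ (c • x) = 1 := normalize_unit hx
  have hneg := h (c • x) hy
  rw [qf_smul] at hneg
  have hc2 : c ^ 2 * (x ⬝ᵥ x) = 1 := by rw [hc]; exact inv_sqrt_sq hd
  have h5 : qf A x = (c ^ 2 * qf A x) * (x ⬝ᵥ x) := by
    rw [show (c ^ 2 * qf A x) * (x ⬝ᵥ x) = qf A x * (c ^ 2 * (x ⬝ᵥ x)) by ring, hc2, mul_one]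
  show x ⬝ᵥ A *ᵥ x < 0
  have hfin : qf A x < 0 := h5 ▸ mul_neg_of_neg_of_pos hneg hd
  exact hfin

lemma shift_psd {n : ℕ} (N : Matrix (Fin n) (Fin n) ℝ) (hN : N.IsHermitian) (hstar : ℝ)
    (h : ∀ x : Fin n → ℝ, x ⬝ᵥ x = 1 → qf N x ≤ hstar) :
    (hstar • (1 : Matrix (Fin n) (Fin n) ℝ) - N).PosSemidef := by
  refine Matrix.PosSemidef.of_dotProduct_mulVec_nonneg ?_ ?_
  · unfold Matrix.IsHermitian
    rw [conjTranspose_eq_transpose_of_trivial, transpose_sub, transpose_smul, transpose_one]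
    have hNt : Nᵀ = N := by rw [← conjTranspose_eq_transpose_of_trivial]; exact hN
    rw [hNt]
  · intro x
    rw [star_trivial, sub_mulVec, dotProduct_sub, smul_mulVec, one_mulVec,
      dotProduct_smul, smul_eq_mul]
    by_cases hx : x = 0
    · rw [hx]; simp
    · have hd : 0 < x ⬝ᵥ x := dot_self_pos hx
      set c : ℝ := (Real.sqrt (x ⬝ᵥ x))⁻¹ with hc
      have hcpos : 0 < c := inv_pos.mpr (Real.sqrt_pos.mpr hd)
      have hy : (c • x) ⬝ᵥ (c • x) = 1 := normalize_unit hx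
      have h2 := h (c • x) hy
      rw [qf_smul] at h2
      have hc2 : c ^ 2 * (x ⬝ᵥ x) = 1 := by rw [hc]; exact inv_sqrt_sq hd
      have hq : qf N x = x ⬝ᵥ (N *ᵥ x) := rfl
      rw [← hq]
      have h5 : qf N x = (c ^ 2 * qf N x) * (x ⬝ᵥ x) := by
        rw [show (c ^ 2 * qf N x) * (x ⬝ᵥ x) = qf N x * (c ^ 2 * (x ⬝ᵥ x)) by ring, hc2, mul_one]
      linarith [mul_le_mul_of_nonneg_right h2 hd.le, h5]

lemma eigen_of_max {n : ℕ} (N : Matrix (Fin n) (Fin n) ℝ) (hN : N.IsHermitian) (hstar : ℝ)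
    (h : ∀ x : Fin n → ℝ, x ⬝ᵥ x = 1 → qf N x ≤ hstar)
    (x : Fin n → ℝ) (hx : x ⬝ᵥ x = 1) (hmax : qf N x = hstar) :
    N *ᵥ x = hstar • x := by
  have hpsd := shift_psd N hN hstar h
  have := (hpsd.dotProduct_mulVec_zero_iff x).mp ?_
  · have h2 : (hstar • (1 : Matrix (Fin n) (Fin n) ℝ) - N) *ᵥ x = 0 := this
    rw [sub_mulVec, smul_mulVec, one_mulVec] at h2
    have := sub_eq_zero.mp h2
    rw [← this]
  · rw [star_trivial, sub_mulVec, dotProduct_sub, smul_mulVec, one_mulVec,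
      dotProduct_smul, smul_eq_mul, hx, mul_one]
    have hq : x ⬝ᵥ (N *ᵥ x) = hstar := hmax
    rw [hq, sub_self]

lemma span_max {n : ℕ} (N : Matrix (Fin n) (Fin n) ℝ) (hstar : ℝ)
    (x y : Fin n → ℝ) (hx : N *ᵥ x = hstar • x) (hy : N *ᵥ y = hstar • y)
    (c d : ℝ) (hz : (c • x + d • y) ⬝ᵥ (c • x + d • y) = 1) :
    qf N (c • x + d • y) = hstar := by
  have hNz : N *ᵥ (c • x + d • y) = hstar • (c • x + d • y) := by
    rw [mulVec_add, mulVec_smul, mulVec_smul, hx, hy, smul_add, smul_comm c hstar,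
      smul_comm d hstar]
  unfold qf
  rw [hNz, dotProduct_smul, smul_eq_mul, hz, mul_one]

end Analysis

section Arith

private lemma pos_of_mul_pos_right {a b : ℝ} (h : 0 < a * b) (hb : 0 < b) : 0 < a := by
  by_contra hc
  push_neg at hc
  nlinarith

lemma dk_plus_far (μ t u2 w2 δ B2 f h : ℝ) (hμ : 0 < μ) (ht : 0 < t) (hu : 0 ≤ u2)
    (hw : 0 ≤ w2) (hwB : w2 ≤ B2) (hq : f + μ⁻¹ * u2 + μ * w2 ≤ h)
    (hfar : w2 + δ ≤ u2 / μ ^ 2) (hδ : 0 < δ) (htb : t ≤ δ * μ / (2 * (B2 + 1))) :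
    f + (μ + t)⁻¹ * u2 + (μ + t) * w2 < h := by
  have hμt : 0 < μ + t := by linarith
  have hB1 : 0 < B2 + 1 := by linarith
  have hDpos : 0 < δ * μ / (2 * (B2 + 1)) := by positivity
  have hD : δ * μ / (2 * (B2 + 1)) * (2 * (B2 + 1)) = δ * μ := by field_simp
  have h1 : w2 * t ≤ B2 * t := mul_le_mul_of_nonneg_right hwB ht.le
  have h2 : B2 * t ≤ B2 * (δ * μ / (2 * (B2 + 1))) :=
    mul_le_mul_of_nonneg_left htb (le_trans hw hwB)
  have hwt : w2 * t < δ * μ := by nlinarith [hD, hDpos, h1, h2]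
  have hfar' : (w2 + δ) * μ ^ 2 ≤ u2 := by
    rw [← le_div_iff₀ (pow_pos hμ 2)]; exact hfar
  have hgt : w2 * μ * (μ + t) < u2 := by nlinarith [hwt, hμ, hfar']
  have hprod : 0 < μ * (μ + t) := mul_pos hμ hμt
  have hkey2 : (μ⁻¹ * u2 + μ * w2 - ((μ + t)⁻¹ * u2 + (μ + t) * w2)) * (μ * (μ + t)) =
      t * (u2 - w2 * μ * (μ + t)) := by
    field_simp
    ring
  have h9 : 0 < (μ⁻¹ * u2 + μ * w2 - ((μ + t)⁻¹ * u2 + (μ + t) * w2)) * (μ * (μ + t)) := by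
    rw [hkey2]; exact mul_pos ht (sub_pos.mpr hgt)
  have hkey := pos_of_mul_pos_right h9 hprod
  linarith

lemma dk_plus_near (μ t u2 w2 B2 γ f h : ℝ) (hμ : 0 < μ) (ht : 0 < t) (hu : 0 ≤ u2)
    (hw : 0 ≤ w2) (hwB : w2 ≤ B2) (hq : f + μ⁻¹ * u2 + μ * w2 ≤ h - γ) (hγ : 0 < γ)
    (htb : t ≤ γ / (2 * (B2 + 1))) :
    f + (μ + t)⁻¹ * u2 + (μ + t) * w2 < h := by
  have hμt : 0 < μ + t := by linarith
  have hB1 : 0 < B2 + 1 := by linarith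
  have h1 : (μ + t)⁻¹ * u2 ≤ μ⁻¹ * u2 := by
    apply mul_le_mul_of_nonneg_right _ hu
    exact inv_anti₀ hμ (by linarith)
  have h2 : t * w2 ≤ t * B2 := mul_le_mul_of_nonneg_left hwB ht.le
  have hDpos : 0 < γ / (2 * (B2 + 1)) := by positivity
  have hD : γ / (2 * (B2 + 1)) * (2 * (B2 + 1)) = γ := by field_simp
  have h3 : t * B2 < γ := by
    nlinarith [mul_le_mul_of_nonneg_right htb (le_trans hw hwB), hD, hDpos]
  nlinarith [h1, h2, h3]

lemma dk_minus_far (μ t u2 w2 δ B2 f h : ℝ) (hμ : 0 < μ) (ht : 0 < t) (ht2 : t ≤ μ / 2)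
    (hu : 0 ≤ u2) (hw : 0 ≤ w2) (hwB : w2 ≤ B2) (hq : f + μ⁻¹ * u2 + μ * w2 ≤ h)
    (hfar : u2 / μ ^ 2 ≤ w2 - δ) (hδ : 0 < δ) (htb : t ≤ δ * μ / (2 * (B2 + 1))) :
    f + (μ - t)⁻¹ * u2 + (μ - t) * w2 < h := by
  have hμt : 0 < μ - t := by linarith
  have hB1 : 0 < B2 + 1 := by linarith
  have hDpos : 0 < δ * μ / (2 * (B2 + 1)) := by positivity
  have hD : δ * μ / (2 * (B2 + 1)) * (2 * (B2 + 1)) = δ * μ := by field_simp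
  have h1 : w2 * t ≤ B2 * t := mul_le_mul_of_nonneg_right hwB ht.le
  have h2 : B2 * t ≤ B2 * (δ * μ / (2 * (B2 + 1))) :=
    mul_le_mul_of_nonneg_left htb (le_trans hw hwB)
  have hwt : w2 * t < δ * μ := by nlinarith [hD, hDpos, h1, h2]
  have hfar' : u2 ≤ (w2 - δ) * μ ^ 2 := by
    rw [← div_le_iff₀ (pow_pos hμ 2)]; exact hfar
  have hlt : u2 < w2 * μ * (μ - t) := by nlinarith [hwt, hμ, hfar', hμt]
  have hprod : 0 < μ * (μ - t) := mul_pos hμ hμt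
  have hkey2 : (μ⁻¹ * u2 + μ * w2 - ((μ - t)⁻¹ * u2 + (μ - t) * w2)) * (μ * (μ - t)) =
      t * (w2 * μ * (μ - t) - u2) := by
    field_simp
    ring
  have h9 : 0 < (μ⁻¹ * u2 + μ * w2 - ((μ - t)⁻¹ * u2 + (μ - t) * w2)) * (μ * (μ - t)) := by
    rw [hkey2]; exact mul_pos ht (sub_pos.mpr hlt)
  have hkey := pos_of_mul_pos_right h9 hprod
  linarith

lemma dk_minus_near (μ t u2 w2 A2 γ f h : ℝ) (hμ : 0 < μ) (ht : 0 < t) (ht2 : t ≤ μ / 2)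
    (hu : 0 ≤ u2) (huA : u2 ≤ A2) (hw : 0 ≤ w2)
    (hq : f + μ⁻¹ * u2 + μ * w2 ≤ h - γ) (hγ : 0 < γ)
    (htb : t ≤ γ * μ ^ 2 / (2 * (2 * A2 + 1))) :
    f + (μ - t)⁻¹ * u2 + (μ - t) * w2 < h := by
  have hμt : 0 < μ - t := by linarith
  have hA1 : 0 < 2 * A2 + 1 := by linarith
  -- (μ-t)⁻¹*u2 - μ⁻¹*u2 = t*u2/(μ*(μ-t)) ≤ t*2*A2/μ^2 < γ
  have hprod : 0 < μ * (μ - t) := mul_pos hμ hμt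
  have hkey2 : ((μ - t)⁻¹ * u2 - μ⁻¹ * u2) * (μ * (μ - t)) = t * u2 := by
    field_simp
    ring
  have hhalf : μ ^ 2 / 2 ≤ μ * (μ - t) := by nlinarith
  have hbound : ((μ - t)⁻¹ * u2 - μ⁻¹ * u2) * (μ ^ 2 / 2) ≤ t * u2 := by
    have hnn : 0 ≤ (μ - t)⁻¹ * u2 - μ⁻¹ * u2 := by
      have : μ⁻¹ ≤ (μ - t)⁻¹ := inv_anti₀ hμt (by linarith)
      nlinarith [this, hu]
    calc ((μ - t)⁻¹ * u2 - μ⁻¹ * u2) * (μ ^ 2 / 2)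
        ≤ ((μ - t)⁻¹ * u2 - μ⁻¹ * u2) * (μ * (μ - t)) :=
          mul_le_mul_of_nonneg_left hhalf hnn
      _ = t * u2 := hkey2
  have htu : t * u2 ≤ γ * μ ^ 2 / (2 * (2 * A2 + 1)) * A2 := by
    have := mul_le_mul htb huA hu (by positivity)
    linarith [this]
  have hfin : ((μ - t)⁻¹ * u2 - μ⁻¹ * u2) < γ := by
    have hμ2 : 0 < μ ^ 2 / 2 := by positivity
    have hst : γ * μ ^ 2 / (2 * (2 * A2 + 1)) * A2 < γ * (μ ^ 2 / 2) := by
      rw [div_mul_eq_mul_div, div_lt_iff₀ (by positivity)]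
      nlinarith [mul_pos hγ (pow_pos hμ 2)]
    have h10 : ((μ - t)⁻¹ * u2 - μ⁻¹ * u2) * (μ ^ 2 / 2) < γ * (μ ^ 2 / 2) := by
      calc ((μ - t)⁻¹ * u2 - μ⁻¹ * u2) * (μ ^ 2 / 2) ≤ t * u2 := hbound
        _ ≤ γ * μ ^ 2 / (2 * (2 * A2 + 1)) * A2 := htu
        _ < γ * (μ ^ 2 / 2) := hst
    exact lt_of_mul_lt_mul_right (by linarith [h10]) hμ2.le
  nlinarith [hfin, mul_pos ht (lt_of_lt_of_le ht (le_refl t)), ht, hw, mul_nonneg ht.le hw]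

lemma far_plus (a b μ ε : ℝ) (hμ : 0 < μ) (hε : 0 < ε) (hb : 0 ≤ b)
    (hsq : μ * ε ≤ (a - μ * b) ^ 2) (hs : 0 < a - μ * b) :
    b ^ 2 + ε / (2 * μ) ≤ a ^ 2 / μ ^ 2 := by
  rw [le_div_iff₀ (pow_pos hμ 2)]
  have h2' : ε / (2 * μ) * μ ^ 2 = ε * μ / 2 := by field_simp
  nlinarith [mul_nonneg hs.le (mul_nonneg hμ.le hb), hsq, mul_pos hε hμ]

lemma far_minus (a b μ ε : ℝ) (hμ : 0 < μ) (hε : 0 < ε) (ha : 0 ≤ a)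
    (hsq : μ * ε ≤ (a - μ * b) ^ 2) (hs : a - μ * b < 0) :
    a ^ 2 / μ ^ 2 ≤ b ^ 2 - ε / (2 * μ) := by
  rw [div_le_iff₀ (pow_pos hμ 2)]
  have h2' : ε / (2 * μ) * μ ^ 2 = ε * μ / 2 := by field_simp
  nlinarith [mul_nonneg (by linarith : (0:ℝ) ≤ μ * b - a) ha, hsq, mul_pos hε hμ, h2']

end Arith

section Dichotomy

lemma en_neg {n : ℕ} (v : Fin n → ℝ) : en (-v) = en v := by
  rw [show -v = (-1 : ℝ) • v by simp, en_smul]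
  simp

lemma sign_dichotomy {n : ℕ} (N : Matrix (Fin n) (Fin n) ℝ) (hN : N.IsHermitian) (hstar : ℝ)
    (hmaxle : ∀ x : Fin n → ℝ, x ⬝ᵥ x = 1 → qf N x ≤ hstar)
    (s : (Fin n → ℝ) → ℝ) (hs_cont : Continuous s)
    (hs_even : ∀ x, s (-x) = s x)
    (hs_ne : ∀ x : Fin n → ℝ, x ⬝ᵥ x = 1 → qf N x = hstar → s x ≠ 0) :
    (∀ x : Fin n → ℝ, x ⬝ᵥ x = 1 → qf N x = hstar → 0 < s x) ∨
    (∀ x : Fin n → ℝ, x ⬝ᵥ x = 1 → qf N x = hstar → s x < 0) := by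
  by_contra hcon
  push_neg at hcon
  obtain ⟨⟨x1, hx1u, hx1m, hx1s⟩, ⟨x2, hx2u, hx2m, hx2s⟩⟩ := hcon
  have hs1 : s x1 < 0 := lt_of_le_of_ne hx1s (hs_ne x1 hx1u hx1m)
  have hs2 : 0 < s x2 := lt_of_le_of_ne hx2s (Ne.symm (hs_ne x2 hx2u hx2m))
  have heig1 : N *ᵥ x1 = hstar • x1 := eigen_of_max N hN hstar hmaxle x1 hx1u hx1m
  have heig2 : N *ᵥ x2 = hstar • x2 := eigen_of_max N hN hstar hmaxle x2 hx2u hx2m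
  set z : ℝ → (Fin n → ℝ) := fun t => (1 - t) • x1 + t • x2 with hz
  have hnz : ∀ t ∈ Set.Icc (0:ℝ) 1, 0 < z t ⬝ᵥ z t := by
    intro t ht
    rcases lt_or_ge 0 (z t ⬝ᵥ z t) with h | h
    · exact h
    · exfalso
      have hzero : z t = 0 := by
        have := dot_self_nonneg (z t)
        exact (dot_self_eq_zero_iff (z t)).mp (le_antisymm h this)
      have heq : (1 - t) • x1 = -(t • x2) := by
        have : (1 - t) • x1 + t • x2 = 0 := hzero
        linear_combination (norm := module) this
      have hen : (1 - t) = t := by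
        have h1 : en ((1 - t) • x1) = |1 - t| := by rw [en_smul, en_one hx1u, mul_one]
        have h2 : en (-(t • x2)) = |t| := by rw [en_neg, en_smul, en_one hx2u, mul_one]
        have := congrArg en heq
        rw [h1, h2] at this
        rw [abs_of_nonneg (by linarith [ht.2] : (0:ℝ) ≤ 1 - t),
          abs_of_nonneg ht.1] at this
        exact this
      have ht12 : t = 1/2 := by linarith
      have hx21 : x2 = -x1 := by
        funext i
        have := congrFun hzero i
        simp only [hz, Pi.add_apply, Pi.smul_apply, smul_eq_mul, Pi.zero_apply, ht12] at this
        simp only [Pi.neg_apply]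
        linarith
      rw [hx21, hs_even] at hs2
      linarith
  have hzc : Continuous z := by
    apply Continuous.add
    · exact (continuous_const.sub continuous_id).smul continuous_const
    · exact continuous_id.smul continuous_const
  have hdc : Continuous fun t => z t ⬝ᵥ z t := continuous_dotself.comp hzc
  set ζ : ℝ → (Fin n → ℝ) := fun t => (Real.sqrt (z t ⬝ᵥ z t))⁻¹ • z t with hζ
  have hζc : ContinuousOn ζ (Set.Icc 0 1) := by
    apply ContinuousOn.fun_smul
    · apply ContinuousOn.inv₀
      · exact (Real.continuous_sqrt.comp hdc).continuousOn
      · intro t ht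
        exact ne_of_gt (Real.sqrt_pos.mpr (hnz t ht))
    · exact hzc.continuousOn
  have hgc : ContinuousOn (fun t => s (ζ t)) (Set.Icc 0 1) := hs_cont.comp_continuousOn hζc
  have hg0 : s (ζ 0) = s x1 := by
    have hz0 : z 0 = x1 := by simp [hz]
    rw [hζ]
    simp only [hz0, hx1u, Real.sqrt_one, inv_one, one_smul]
  have hg1 : s (ζ 1) = s x2 := by
    have hz1 : z 1 = x2 := by simp [hz]
    rw [hζ]
    simp only [hz1, hx2u, Real.sqrt_one, inv_one, one_smul]
  have hivt := intermediate_value_Icc (by norm_num : (0:ℝ) ≤ 1) hgc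
  have h0mem : (0:ℝ) ∈ Set.Icc (s (ζ 0)) (s (ζ 1)) := by
    rw [hg0, hg1]; exact ⟨hs1.le, hs2.le⟩
  obtain ⟨t, ht, hgt⟩ := hivt h0mem
  -- ζ t is a unit vector in the top eigenspace
  have hunit : ζ t ⬝ᵥ ζ t = 1 := by
    rw [hζ]
    simp only
    rw [smul_dot_smul]
    exact inv_sqrt_sq (hnz t ht)
  have hqfζ : qf N (ζ t) = hstar := by
    have hform : ζ t = ((Real.sqrt (z t ⬝ᵥ z t))⁻¹ * (1 - t)) • x1 +
        ((Real.sqrt (z t ⬝ᵥ z t))⁻¹ * t) • x2 := by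
      rw [hζ]
      simp only [hz, smul_add, smul_smul]
    rw [hform]
    apply span_max N hstar x1 x2 heig1 heig2
    rw [← hform]
    exact hunit
  exact hs_ne (ζ t) hunit hqfζ hgt

end Dichotomy

section Core

set_option maxHeartbeats 2000000 in
lemma core {p q r : ℕ} (M : Matrix (Fin q) (Fin q) ℝ) (hM : M.IsHermitian)
    (E : Matrix (Fin q) (Fin p) ℝ) (F : Matrix (Fin r) (Fin q) ℝ)
    (ε : ℝ) (hε : 0 < ε)
    (hsph : ∀ x : Fin q → ℝ, x ⬝ᵥ x = 1 →
      qf M x + 2 * (Real.sqrt (qf (E * Eᵀ) x) * Real.sqrt (qf (Fᵀ * F) x)) ≤ -ε)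
    (x0 : Fin q → ℝ) (hx0 : x0 ⬝ᵥ x0 = 1) :
    ∃ lam : ℝ, 0 < lam ∧ ∀ x : Fin q → ℝ, x ⬝ᵥ x = 1 →
      qf M x + lam⁻¹ * qf (E * Eᵀ) x + lam * qf (Fᵀ * F) x < 0 := by
  set u2 : (Fin q → ℝ) → ℝ := qf (E * Eᵀ) with hu2def
  set w2 : (Fin q → ℝ) → ℝ := qf (Fᵀ * F) with hw2def
  have hu2nn : ∀ x, 0 ≤ u2 x := by
    intro x
    rw [hu2def]
    show 0 ≤ x ⬝ᵥ ((E * Eᵀ) *ᵥ x)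
    rw [qf_EEt]
    exact dot_self_nonneg _
  have hw2nn : ∀ x, 0 ≤ w2 x := by
    intro x
    rw [hw2def]
    show 0 ≤ x ⬝ᵥ ((Fᵀ * F) *ᵥ x)
    rw [qf_FtF]
    exact dot_self_nonneg _
  have hKne : ({x : Fin q → ℝ | x ⬝ᵥ x = 1}).Nonempty := ⟨x0, hx0⟩
  obtain ⟨xA, hxAu, hxAmax⟩ := exists_max _ isCompact_sphere' hKne u2 (continuous_qf _)
  obtain ⟨xB, hxBu, hxBmax⟩ := exists_max _ isCompact_sphere' hKne w2 (continuous_qf _)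
  obtain ⟨xC, hxCu, hxCmax⟩ := exists_max _ isCompact_sphere' hKne
    (fun x => -(qf M x)) (continuous_qf M).neg
  set A2 := u2 xA with hA2def
  set B2 := w2 xB with hB2def
  set C0 := -(qf M xC) with hC0def
  have hA2nn : 0 ≤ A2 := hu2nn xA
  have hB2nn : 0 ≤ B2 := hw2nn xB
  have hfC : ∀ x : Fin q → ℝ, x ⬝ᵥ x = 1 → -C0 ≤ qf M x := by
    intro x hx
    have := hxCmax x hx
    simp only [hC0def] at *
    linarith
  have hfneg : ∀ x : Fin q → ℝ, x ⬝ᵥ x = 1 → qf M x ≤ -ε := by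
    intro x hx
    have h1 := hsph x hx
    have h2 : 0 ≤ 2 * (Real.sqrt (qf (E * Eᵀ) x) * Real.sqrt (qf (Fᵀ * F) x)) := by positivity
    linarith
  by_cases hA2pos : 0 < A2
  case neg =>
    -- u2 vanishes identically on the sphere
    push_neg at hA2pos
    refine ⟨ε / (2 * (B2 + 1)), by positivity, ?_⟩
    intro x hx
    have hu0 : u2 x = 0 := le_antisymm (le_trans (hxAmax x hx) hA2pos) (hu2nn x)
    have hw : w2 x ≤ B2 := hxBmax x hx
    have hlam : (0:ℝ) < ε / (2 * (B2 + 1)) := by positivity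
    have hD : ε / (2 * (B2 + 1)) * (2 * (B2 + 1)) = ε := by
      field_simp
    have hlt : ε / (2 * (B2 + 1)) * w2 x < ε := by
      nlinarith [mul_le_mul_of_nonneg_left hw hlam.le, hD, hlam, hw2nn x]
    have := hfneg x hx
    show qf M x + (ε / (2 * (B2 + 1)))⁻¹ * u2 x + ε / (2 * (B2 + 1)) * w2 x < 0
    rw [hu0, mul_zero]
    linarith
  by_cases hB2pos : 0 < B2
  case neg =>
    push_neg at hB2pos
    refine ⟨2 * (A2 + 1) / ε, by positivity, ?_⟩
    intro x hx
    have hw0 : w2 x = 0 := le_antisymm (le_trans (hxBmax x hx) hB2pos) (hw2nn x)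
    have hu : u2 x ≤ A2 := hxAmax x hx
    have hinv : (2 * (A2 + 1) / ε)⁻¹ = ε / (2 * (A2 + 1)) := by
      rw [inv_div]
    have hlam : (0:ℝ) < ε / (2 * (A2 + 1)) := by positivity
    have hD : ε / (2 * (A2 + 1)) * (2 * (A2 + 1)) = ε := by field_simp
    have hlt : ε / (2 * (A2 + 1)) * u2 x < ε := by
      nlinarith [mul_le_mul_of_nonneg_left hu hlam.le, hD, hlam, hu2nn x]
    have := hfneg x hx
    show qf M x + (2 * (A2 + 1) / ε)⁻¹ * u2 x + 2 * (A2 + 1) / ε * w2 x < 0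
    rw [hw0, mul_zero, hinv]
    linarith
  -- main case
  by_contra hcon
  push_neg at hcon
  set qq : ℝ → (Fin q → ℝ) → ℝ := fun μ x => qf M x + μ⁻¹ * u2 x + μ * w2 x with hqqdef
  have hqqcont : ∀ μ : ℝ, Continuous (qq μ) := by
    intro μ
    exact ((continuous_qf M).add (continuous_const.mul (continuous_qf _))).add
      (continuous_const.mul (continuous_qf _))
  have Hmax : ∀ μ : ℝ, ∃ xm : Fin q → ℝ, xm ⬝ᵥ xm = 1 ∧
      ∀ y : Fin q → ℝ, y ⬝ᵥ y = 1 → qq μ y ≤ qq μ xm := by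
    intro μ
    obtain ⟨xm, hxm, hmax⟩ := exists_max _ isCompact_sphere' hKne (qq μ) (hqqcont μ)
    exact ⟨xm, hxm, fun y hy => hmax y hy⟩
  choose X hXu hXmax using Hmax
  set h : ℝ → ℝ := fun μ => qq μ (X μ) with hhdef
  have hub : ∀ μ (x : Fin q → ℝ), x ⬝ᵥ x = 1 → qq μ x ≤ h μ := fun μ x hx => hXmax μ x hx
  have hge0 : ∀ μ : ℝ, 0 < μ → 0 ≤ h μ := by
    intro μ hμ
    obtain ⟨x, hx, hq⟩ := hcon μ hμ
    exact le_trans hq (hub μ x hx)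
  set T := h 1 with hTdef
  set D := |C0| + |T| + 1 with hDdef
  have hDpos : 0 < D := by positivity
  set α' : ℝ := min (A2 / D) 1 with hαdef
  set β' : ℝ := max (D / B2) 1 with hβdef
  have hαpos : 0 < α' := lt_min (by positivity) one_pos
  have hαβ : α' ≤ β' := le_trans (min_le_right _ _) (le_max_right _ _)
  have h1mem : (1:ℝ) ∈ Set.Icc α' β' := ⟨min_le_right _ _, le_max_right _ _⟩
  have hlow : ∀ μ : ℝ, 0 < μ → μ ≤ A2 / D → |T| + 1 ≤ h μ := by
    intro μ hμ hμle
    have h1 : qq μ xA ≤ h μ := hub μ xA hxAu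
    have h2 : -C0 ≤ qf M xA := hfC xA hxAu
    have h3 : μ * D ≤ A2 := by
      rw [← le_div_iff₀ hDpos]; exact hμle
    have h4 : D ≤ μ⁻¹ * u2 xA := by
      have h5 := mul_le_mul_of_nonneg_left h3 (inv_pos.mpr hμ).le
      have h6 : μ⁻¹ * (μ * D) = D := by field_simp
      linarith [h5, h6.ge, h6.le]
    have h7 : 0 ≤ μ * w2 xA := mul_nonneg hμ.le (hw2nn xA)
    have h8 : -(|C0|) ≤ -C0 := neg_le_neg (le_abs_self C0)
    have h9 : qq μ xA = qf M xA + μ⁻¹ * u2 xA + μ * w2 xA := rfl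
    rw [hDdef] at h4
    rw [h9] at h1
    clear_value u2 w2 qq h
    linarith
  have hhigh : ∀ μ : ℝ, 0 < μ → D / B2 ≤ μ → |T| + 1 ≤ h μ := by
    intro μ hμ hμge
    have h1 : qq μ xB ≤ h μ := hub μ xB hxBu
    have h2 : -C0 ≤ qf M xB := hfC xB hxBu
    have h3 : D ≤ μ * w2 xB := by
      show D ≤ μ * B2
      rw [← div_le_iff₀ hB2pos]
      exact hμge
    have h7 : 0 ≤ μ⁻¹ * u2 xB := mul_nonneg (inv_pos.mpr hμ).le (hu2nn xB)
    have h8 : -(|C0|) ≤ -C0 := neg_le_neg (le_abs_self C0)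
    have h9 : qq μ xB = qf M xB + μ⁻¹ * u2 xB + μ * w2 xB := rfl
    rw [hDdef] at h3
    rw [h9] at h1
    clear_value u2 w2 qq h
    linarith
  -- Lipschitz continuity of h on [α', β']
  have hlip : ∀ μ ∈ Set.Icc α' β', ∀ ν ∈ Set.Icc α' β',
      h μ - h ν ≤ (A2 / α' ^ 2 + B2) * |μ - ν| := by
    intro μ hμ ν hν
    have hμpos : 0 < μ := lt_of_lt_of_le hαpos hμ.1
    have hνpos : 0 < ν := lt_of_lt_of_le hαpos hν.1
    have hup : qq ν (X μ) ≤ h ν := hub ν (X μ) (hXu μ)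
    have hXμu := hXu μ
    have hdiff : h μ - h ν ≤ (μ⁻¹ - ν⁻¹) * u2 (X μ) + (μ - ν) * w2 (X μ) := by
      have : qq μ (X μ) - qq ν (X μ) = (μ⁻¹ - ν⁻¹) * u2 (X μ) + (μ - ν) * w2 (X μ) := by
        show qf M (X μ) + μ⁻¹ * u2 (X μ) + μ * w2 (X μ) -
          (qf M (X μ) + ν⁻¹ * u2 (X μ) + ν * w2 (X μ)) = _
        ring
      have hh : h μ = qq μ (X μ) := rfl
      clear_value u2 w2 qq h
      linarith [this.le, this.ge]
    have habs1 : |μ⁻¹ - ν⁻¹| ≤ |μ - ν| / α' ^ 2 := by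
      have heq : μ⁻¹ - ν⁻¹ = (ν - μ) / (μ * ν) := by
        field_simp
      rw [heq, abs_div, abs_sub_comm ν μ]
      have hμν : α' ^ 2 ≤ |μ * ν| := by
        rw [abs_of_pos (mul_pos hμpos hνpos)]
        nlinarith [hμ.1, hν.1, hαpos]
      exact div_le_div_of_nonneg_left (abs_nonneg _) (by positivity) hμν
    have hb1 : (μ⁻¹ - ν⁻¹) * u2 (X μ) ≤ (|μ - ν| / α' ^ 2) * A2 := by
      calc (μ⁻¹ - ν⁻¹) * u2 (X μ) ≤ |μ⁻¹ - ν⁻¹| * u2 (X μ) :=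
            mul_le_mul_of_nonneg_right (le_abs_self _) (hu2nn _)
        _ ≤ (|μ - ν| / α' ^ 2) * A2 := by
            apply mul_le_mul habs1 (hxAmax _ hXμu) (hu2nn _) (by positivity)
    have hb2 : (μ - ν) * w2 (X μ) ≤ |μ - ν| * B2 := by
      calc (μ - ν) * w2 (X μ) ≤ |μ - ν| * w2 (X μ) :=
            mul_le_mul_of_nonneg_right (le_abs_self _) (hw2nn _)
        _ ≤ |μ - ν| * B2 := mul_le_mul_of_nonneg_left (hxBmax _ hXμu) (abs_nonneg _)
    calc h μ - h ν ≤ (μ⁻¹ - ν⁻¹) * u2 (X μ) + (μ - ν) * w2 (X μ) := hdiff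
      _ ≤ (|μ - ν| / α' ^ 2) * A2 + |μ - ν| * B2 := add_le_add hb1 hb2
      _ = (A2 / α' ^ 2 + B2) * |μ - ν| := by ring
  have hcont : ContinuousOn h (Set.Icc α' β') := by
    have hC : (0:ℝ) ≤ A2 / α' ^ 2 + B2 := by positivity
    apply LipschitzOnWith.continuousOn (K := Real.toNNReal (A2 / α' ^ 2 + B2))
    rw [lipschitzOnWith_iff_dist_le_mul]
    intro μ hμ ν hν
    rw [Real.dist_eq, Real.dist_eq]
    have hcoe : (Real.toNNReal (A2 / α' ^ 2 + B2) : ℝ) = A2 / α' ^ 2 + B2 :=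
      Real.coe_toNNReal _ hC
    rw [hcoe, abs_sub_le_iff]
    constructor
    · exact hlip μ hμ ν hν
    · rw [abs_sub_comm]
      exact hlip ν hν μ hμ
  obtain ⟨μs, hμsmem, hmin⟩ := isCompact_Icc.exists_isMinOn ⟨1, h1mem⟩ hcont
  have hμspos : 0 < μs := lt_of_lt_of_le hαpos hμsmem.1
  have hT : h μs ≤ T := hmin h1mem
  have hglob : ∀ μ : ℝ, 0 < μ → h μs ≤ h μ := by
    intro μ hμ
    by_cases hmem : μ ∈ Set.Icc α' β'
    · exact hmin hmem
    · rw [Set.mem_Icc] at hmem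
      push_neg at hmem
      rcases lt_or_ge μ α' with hlt | hge
      · have : μ ≤ A2 / D := le_trans hlt.le (min_le_left _ _)
        have := hlow μ hμ this
        have hTa : T ≤ |T| := le_abs_self T
        linarith
      · have hβlt : β' < μ := hmem hge
        have : D / B2 ≤ μ := le_trans (le_max_left _ _) hβlt.le
        have := hhigh μ hμ this
        have hTa : T ≤ |T| := le_abs_self T
        linarith
  set hs : ℝ := h μs with hhsdef
  have hstar0 : 0 ≤ hs := hge0 μs hμspos
  set N := M + μs⁻¹ • (E * Eᵀ) + μs • (Fᵀ * F) with hNdef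
  have hqfN : ∀ x : Fin q → ℝ, qf N x = qq μs x := by
    intro x
    show x ⬝ᵥ ((M + μs⁻¹ • (E * Eᵀ) + μs • (Fᵀ * F)) *ᵥ x) = _
    rw [qf_lam, ← qf_EEt, ← qf_FtF]
    rfl
  have hNherm : N.IsHermitian := herm_lam M hM E F μs⁻¹ μs
  have hmaxleN : ∀ x : Fin q → ℝ, x ⬝ᵥ x = 1 → qf N x ≤ hs := by
    intro x hx
    rw [hqfN]
    exact hub μs x hx
  set sf : (Fin q → ℝ) → ℝ := fun x => Real.sqrt (u2 x) - μs * Real.sqrt (w2 x) with hsfdef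
  have hscont : Continuous sf := by
    apply Continuous.sub
    · exact Real.continuous_sqrt.comp (continuous_qf _)
    · exact continuous_const.mul (Real.continuous_sqrt.comp (continuous_qf _))
  have hseven : ∀ x, sf (-x) = sf x := by
    intro x
    have hu : u2 (-x) = u2 x := by
      rw [hu2def, show -x = (-1:ℝ) • x by simp, qf_smul]; norm_num
    have hw : w2 (-x) = w2 x := by
      rw [hw2def, show -x = (-1:ℝ) • x by simp, qf_smul]; norm_num
    simp only [hsfdef, hu, hw]
  have hkey : ∀ x : Fin q → ℝ, x ⬝ᵥ x = 1 → qf N x = hs →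
      μs * ε ≤ (Real.sqrt (u2 x) - μs * Real.sqrt (w2 x)) ^ 2 := by
    intro x hx hmax
    set a := Real.sqrt (u2 x) with hadef
    set b := Real.sqrt (w2 x) with hbdef
    have ha2 : a ^ 2 = u2 x := Real.sq_sqrt (hu2nn x)
    have hb2 : b ^ 2 = w2 x := Real.sq_sqrt (hw2nn x)
    have h1 : qq μs x = hs := by rw [← hqfN x]; exact hmax
    have h2 : qf M x + μs⁻¹ * u2 x + μs * w2 x = hs := h1
    have h3 := hsph x hx
    have h4 : qf M x + 2 * (a * b) ≤ -ε := h3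
    have hid : (a - μs * b) ^ 2 = μs * (μs⁻¹ * a ^ 2 + μs * b ^ 2 - 2 * (a * b)) := by
      field_simp
      ring
    rw [hid, ha2, hb2]
    have h5 : ε ≤ μs⁻¹ * u2 x + μs * w2 x - 2 * (a * b) := by
      rw [← ha2, ← hb2] at h2 ⊢
      clear_value u2 w2 qq h hs
      linarith [hstar0, h2, h4]
    calc μs * ε ≤ μs * (μs⁻¹ * u2 x + μs * w2 x - 2 * (a * b)) :=
          mul_le_mul_of_nonneg_left h5 hμspos.le
      _ = _ := by rw [← ha2, ← hb2]
  have hs_ne : ∀ x : Fin q → ℝ, x ⬝ᵥ x = 1 → qf N x = hs → sf x ≠ 0 := by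
    intro x hx hmax hzero
    have := hkey x hx hmax
    rw [show Real.sqrt (u2 x) - μs * Real.sqrt (w2 x) = sf x from rfl, hzero] at this
    nlinarith [mul_pos hμspos hε]
  set δ : ℝ := ε / (4 * μs) with hδdef
  have hδpos : 0 < δ := by positivity
  rcases sign_dichotomy N hNherm hs hmaxleN sf hscont hseven hs_ne with hpos | hneg
  · -- a > μ b on maximizers; increase μ
    have claim_far : ∀ x : Fin q → ℝ, x ⬝ᵥ x = 1 → qf N x = hs →
        w2 x + 2 * δ ≤ u2 x / μs ^ 2 := by
      intro x hx hmax
      have h1 := far_plus (Real.sqrt (u2 x)) (Real.sqrt (w2 x)) μs ε hμspos hε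
        (Real.sqrt_nonneg _) (hkey x hx hmax) (hpos x hx hmax)
      rw [Real.sq_sqrt (hu2nn x), Real.sq_sqrt (hw2nn x)] at h1
      have : ε / (2 * μs) = 2 * δ := by rw [hδdef]; ring
      linarith [h1, this.le, this.ge]
    set wfun : (Fin q → ℝ) → ℝ := fun x => u2 x / μs ^ 2 - w2 x with hwfdef
    have hwfcont : Continuous wfun :=
      ((continuous_qf _).div_const _).sub (continuous_qf _)
    have hγex : ∃ γ : ℝ, 0 < γ ∧ ∀ x : Fin q → ℝ, x ⬝ᵥ x = 1 → wfun x ≤ δ →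
        qq μs x ≤ hs - γ := by
      set K2 := {x : Fin q → ℝ | x ⬝ᵥ x = 1} ∩ {x | wfun x ≤ δ} with hK2def
      by_cases hK2ne : K2.Nonempty
      · have hK2c : IsCompact K2 :=
          isCompact_sphere'.inter_right (isClosed_le hwfcont continuous_const)
        obtain ⟨xm, hxm, hxmmax⟩ := exists_max K2 hK2c hK2ne (qq μs) (hqqcont μs)
        have hxmu : xm ⬝ᵥ xm = 1 := hxm.1
        have hxmw : wfun xm ≤ δ := hxm.2
        have hne : qq μs xm ≠ hs := by
          intro heq
          have := claim_far xm hxmu (by rw [hqfN]; exact heq)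
          rw [hwfdef] at hxmw
          simp only at hxmw
          linarith
        have hlt : qq μs xm < hs := lt_of_le_of_ne (hub μs xm hxmu) hne
        refine ⟨hs - qq μs xm, by linarith, ?_⟩
        intro x hx hwx
        have : x ∈ K2 := ⟨hx, hwx⟩
        have := hxmmax x this
        linarith
      · refine ⟨1, one_pos, ?_⟩
        intro x hx hwx
        exact absurd ⟨x, hx, hwx⟩ hK2ne
    obtain ⟨γ, hγpos, hbound⟩ := hγex
    set t : ℝ := min (δ * μs / (2 * (B2 + 1))) (γ / (2 * (B2 + 1))) with htdef
    have htpos : 0 < t := lt_min (by positivity) (by positivity)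
    set y := X (μs + t) with hydef
    have hyu : y ⬝ᵥ y = 1 := hXu (μs + t)
    have hless : qq (μs + t) y < hs := by
      show qf M y + (μs + t)⁻¹ * u2 y + (μs + t) * w2 y < hs
      by_cases hyfar : δ < wfun y
      · apply dk_plus_far μs t (u2 y) (w2 y) δ B2 (qf M y) hs hμspos htpos (hu2nn y)
          (hw2nn y) (hxBmax y hyu) (hub μs y hyu) ?_ hδpos (min_le_left _ _)
        rw [hwfdef] at hyfar
        simp only at hyfar
        linarith
      · push_neg at hyfar
        exact dk_plus_near μs t (u2 y) (w2 y) B2 γ (qf M y) hs hμspos htpos (hu2nn y)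
          (hw2nn y) (hxBmax y hyu) (hbound y hyu hyfar) hγpos (min_le_right _ _)
    have hfin : h (μs + t) < hs := hless
    have := hglob (μs + t) (by linarith)
    linarith
  · -- a < μ b on maximizers; decrease μ
    have claim_far : ∀ x : Fin q → ℝ, x ⬝ᵥ x = 1 → qf N x = hs →
        u2 x / μs ^ 2 ≤ w2 x - 2 * δ := by
      intro x hx hmax
      have h1 := far_minus (Real.sqrt (u2 x)) (Real.sqrt (w2 x)) μs ε hμspos hε
        (Real.sqrt_nonneg _) (hkey x hx hmax) (hneg x hx hmax)
      rw [Real.sq_sqrt (hu2nn x), Real.sq_sqrt (hw2nn x)] at h1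
      have : ε / (2 * μs) = 2 * δ := by rw [hδdef]; ring
      linarith [h1, this.le, this.ge]
    set wfun : (Fin q → ℝ) → ℝ := fun x => w2 x - u2 x / μs ^ 2 with hwfdef
    have hwfcont : Continuous wfun :=
      (continuous_qf _).sub ((continuous_qf _).div_const _)
    have hγex : ∃ γ : ℝ, 0 < γ ∧ ∀ x : Fin q → ℝ, x ⬝ᵥ x = 1 → wfun x ≤ δ →
        qq μs x ≤ hs - γ := by
      set K2 := {x : Fin q → ℝ | x ⬝ᵥ x = 1} ∩ {x | wfun x ≤ δ} with hK2def
      by_cases hK2ne : K2.Nonempty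
      · have hK2c : IsCompact K2 :=
          isCompact_sphere'.inter_right (isClosed_le hwfcont continuous_const)
        obtain ⟨xm, hxm, hxmmax⟩ := exists_max K2 hK2c hK2ne (qq μs) (hqqcont μs)
        have hxmu : xm ⬝ᵥ xm = 1 := hxm.1
        have hxmw : wfun xm ≤ δ := hxm.2
        have hne : qq μs xm ≠ hs := by
          intro heq
          have := claim_far xm hxmu (by rw [hqfN]; exact heq)
          rw [hwfdef] at hxmw
          simp only at hxmw
          linarith
        have hlt : qq μs xm < hs := lt_of_le_of_ne (hub μs xm hxmu) hne
        refine ⟨hs - qq μs xm, by linarith, ?_⟩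
        intro x hx hwx
        have := hxmmax x ⟨hx, hwx⟩
        linarith
      · exact ⟨1, one_pos, fun x hx hwx => absurd ⟨x, hx, hwx⟩ hK2ne⟩
    obtain ⟨γ, hγpos, hbound⟩ := hγex
    set A2' := A2 with hA2'def
    set t : ℝ := min (μs / 2) (min (δ * μs / (2 * (B2 + 1)))
      (γ * μs ^ 2 / (2 * (2 * A2 + 1)))) with htdef
    have htpos : 0 < t :=
      lt_min (by positivity) (lt_min (by positivity) (by positivity))
    set y := X (μs - t) with hydef
    have hyu : y ⬝ᵥ y = 1 := hXu (μs - t)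
    have ht2 : t ≤ μs / 2 := min_le_left _ _
    have hless : qq (μs - t) y < hs := by
      show qf M y + (μs - t)⁻¹ * u2 y + (μs - t) * w2 y < hs
      by_cases hyfar : δ < wfun y
      · apply dk_minus_far μs t (u2 y) (w2 y) δ B2 (qf M y) hs hμspos htpos ht2 (hu2nn y)
          (hw2nn y) (hxBmax y hyu) (hub μs y hyu) ?_ hδpos
          (le_trans (min_le_right _ _) (min_le_left _ _))
        rw [hwfdef] at hyfar
        simp only at hyfar
        linarith
      · push_neg at hyfar
        exact dk_minus_near μs t (u2 y) (w2 y) A2 γ (qf M y) hs hμspos htpos ht2 (hu2nn y)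
          (hxAmax y hyu) (hw2nn y) (hbound y hyu hyfar) hγpos
          (le_trans (min_le_right _ _) (min_le_right _ _))
    have hfin : h (μs - t) < hs := hless
    have := hglob (μs - t) (by linarith)
    linarith

end Core

end Petersen

open Petersen in
theorem stmt12 (p q r : ℕ) (M : Matrix (Fin q) (Fin q) ℝ) (hM : M.IsHermitian)
    (E : Matrix (Fin q) (Fin p) ℝ) (F : Matrix (Fin r) (Fin q) ℝ) :
    (∀ Υ : Matrix (Fin p) (Fin r) ℝ, specNorm Υ ≤ 1 →
      (-(M + E * Υ * F + (E * Υ * F)ᵀ)).PosDef) ↔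
    ∃ lam : ℝ, 0 < lam ∧ (-(M + lam⁻¹ • (E * Eᵀ) + lam • (Fᵀ * F))).PosDef := by
  constructor
  · intro H
    rcases Nat.eq_zero_or_pos q with hq | hq
    · subst hq
      refine ⟨1, one_pos, ?_, ?_⟩
      · show _ = _
        funext i j
        exact i.elim0
      · intro x hx
        exact absurd (Finsupp.ext fun i => i.elim0) hx
    · -- nonempty sphere
      set x0 : Fin q → ℝ := Pi.single ⟨0, hq⟩ 1 with hx0def
      have hx0 : x0 ⬝ᵥ x0 = 1 := by
        rw [hx0def]
        simp [dotProduct, Pi.single_apply]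
      set g : (Fin q → ℝ) → ℝ := fun x =>
        qf M x + 2 * (Real.sqrt (qf (E * Eᵀ) x) * Real.sqrt (qf (Fᵀ * F) x)) with hgdef
      have hgcont : Continuous g := by
        apply Continuous.add (continuous_qf M)
        exact continuous_const.mul ((Real.continuous_sqrt.comp (continuous_qf _)).mul
          (Real.continuous_sqrt.comp (continuous_qf _)))
      obtain ⟨xg, hxgu, hxgmax⟩ := exists_max _ isCompact_sphere' ⟨x0, hx0⟩ g hgcont
      have hgval : ∀ x : Fin q → ℝ, x ⬝ᵥ x = 1 → g x =
          x ⬝ᵥ (M *ᵥ x) + 2 * (en (Eᵀ *ᵥ x) * en (F *ᵥ x)) := by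
        intro x _
        rw [hgdef]
        have h1 : qf (E * Eᵀ) x = (Eᵀ *ᵥ x) ⬝ᵥ (Eᵀ *ᵥ x) := qf_EEt E x
        have h2 : qf (Fᵀ * F) x = (F *ᵥ x) ⬝ᵥ (F *ᵥ x) := qf_FtF F x
        simp only [h1, h2]
        rfl
      have hne : ∀ x : Fin q → ℝ, x ⬝ᵥ x = 1 → x ≠ 0 := by
        intro x hx h0
        rw [h0] at hx
        simp [dotProduct] at hx
      have hgneg : ∀ x : Fin q → ℝ, x ⬝ᵥ x = 1 → g x < 0 := by
        intro x hx
        rw [hgval x hx]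
        exact step1 M E F H x (hne x hx)
      set ε : ℝ := -(g xg) with hεdef
      have hε : 0 < ε := by
        rw [hεdef]
        linarith [hgneg xg hxgu]
      have hsph : ∀ x : Fin q → ℝ, x ⬝ᵥ x = 1 →
          qf M x + 2 * (Real.sqrt (qf (E * Eᵀ) x) * Real.sqrt (qf (Fᵀ * F) x)) ≤ -ε := by
        intro x hx
        have hle := hxgmax x hx
        rw [hεdef]
        have hgx : g x = qf M x + 2 * (Real.sqrt (qf (E * Eᵀ) x) *
            Real.sqrt (qf (Fᵀ * F) x)) := rfl
        have hgxg : g xg = qf M xg + 2 * (Real.sqrt (qf (E * Eᵀ) xg) *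
            Real.sqrt (qf (Fᵀ * F) xg)) := rfl
        clear_value g
        linarith [hle, hgx.le, hgx.ge]
      obtain ⟨lam, hlam, hcore⟩ := core M hM E F ε hε hsph x0 hx0
      refine ⟨lam, hlam, ?_⟩
      apply posdef_of_sphere _ (herm_lam M hM E F lam⁻¹ lam)
      intro x hx
      have heq : qf (M + lam⁻¹ • (E * Eᵀ) + lam • (Fᵀ * F)) x =
          qf M x + lam⁻¹ * qf (E * Eᵀ) x + lam * qf (Fᵀ * F) x := by
        show x ⬝ᵥ ((M + lam⁻¹ • (E * Eᵀ) + lam • (Fᵀ * F)) *ᵥ x) = _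
        rw [qf_lam, ← qf_EEt, ← qf_FtF]
        rfl
      rw [heq]
      exact hcore x hx
  · rintro ⟨lam, hlam, hpd⟩ Y hY
    exact backward M hM E F lam hlam hpd Y hY
end
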